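/- Let H be a Hopf algebra with bijective antipode over a field k containing ℚ, C a left H-module coalgebra, A a left H-module algebra, and M a stable right-left anti-Yetter-Drinfeld module over H. Suppose C acts on A via a linear map C ⊗ A → A satisfying c(ab) = (c^{(1)}a)(c^{(2)}b), c1 = ε(c)1, and h(ca) = (hc)a for all h ∈ H, c ∈ C, a, b ∈ A. Then for every element x = m ⊗_H (c_0 ⊗ ⋯ ⊗ c_n) of M ⊗_H C^{⊗(n+1)} that is a cyclic cocycle (i.e., b_n x = 0 and τ_n x = (−1)^n x) and every f ∈ Hom_H(M ⊗ A, k) with b_0 f = 0 and τ_0 f = f, the functional (x # f)(a_0 ⊗ ⋯ ⊗ a_n) := f(m ⊗_H (c_0 a_0)(c_1 a_1)⋯(c_n a_n)) is a cyclic n-cocycle on the algebra A in the ordinary cyclic cohomology complex of A, and its cyclic cohomology class depends only on the class of x in HC^n_H(C,M). -/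

import Mathlib

open TensorProduct

namespace HC

variable {k : Type} [Field k]
variable {H : Type} [Ring H] [Algebra k H]
variable {M : Type} [AddCommGroup M] [Module k M]

def IsLAct (act : H →ₗ[k] M →ₗ[k] M) : Prop :=
  act 1 = LinearMap.id ∧ ∀ g h : H, act (g * h) = (act g) ∘ₗ (act h)

def IsRAct (act : H →ₗ[k] M →ₗ[k] M) : Prop :=
  act 1 = LinearMap.id ∧ ∀ g h : H, act (g * h) = (act h) ∘ₗ (act g)

def IsLCoact (Δ : H →ₗ[k] H ⊗[k] H) (ε : H →ₗ[k] k)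
    (coact : M →ₗ[k] H ⊗[k] M) : Prop :=
  ((TensorProduct.map Δ LinearMap.id) ∘ₗ coact =
    ((TensorProduct.assoc k H H M).symm.toLinearMap) ∘ₗ
      (TensorProduct.map LinearMap.id coact) ∘ₗ coact) ∧
  (∀ m : M, (TensorProduct.lid k M) ((TensorProduct.map ε LinearMap.id) (coact m)) = m)

def AYDrl (Δ : H →ₗ[k] H ⊗[k] H) (S : H →ₗ[k] H)
    (act : H →ₗ[k] M →ₗ[k] M) (coact : M →ₗ[k] H ⊗[k] M) : Prop :=
  ∀ (h : H) (m : M) (s : Finset ℕ) (a b : ℕ → H)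
    (t : ℕ → Finset ℕ) (c d : ℕ → ℕ → H)
    (u : Finset ℕ) (e : ℕ → H) (m0 : ℕ → M),
    Δ h = ∑ i ∈ s, a i ⊗ₜ b i →
    (∀ i ∈ s, Δ (b i) = ∑ j ∈ t i, c i j ⊗ₜ d i j) →
    coact m = ∑ l ∈ u, e l ⊗ₜ m0 l →
    coact (act h m) = ∑ i ∈ s, ∑ j ∈ t i, ∑ l ∈ u,
      (S (d i j) * e l * a i) ⊗ₜ act (c i j) (m0 l)

def StableL (act : H →ₗ[k] M →ₗ[k] M) (coact : M →ₗ[k] H ⊗[k] M) : Prop :=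
  ∀ (m : M) (u : Finset ℕ) (e : ℕ → H) (m0 : ℕ → M),
    coact m = ∑ l ∈ u, e l ⊗ₜ m0 l →
    ∑ l ∈ u, act (e l) (m0 l) = m

variable {C : Type} [AddCommGroup C] [Module k C]

/-- Coalgebra axioms for `(ΔC, εC)`. -/
def IsCoalg (ΔC : C →ₗ[k] C ⊗[k] C) (εC : C →ₗ[k] k) : Prop :=
  ((TensorProduct.map ΔC LinearMap.id) ∘ₗ ΔC =
    (TensorProduct.assoc k C C C).symm.toLinearMap ∘ₗ
      (TensorProduct.map LinearMap.id ΔC) ∘ₗ ΔC) ∧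
  (∀ c : C, (TensorProduct.lid k C) ((TensorProduct.map εC LinearMap.id) (ΔC c)) = c) ∧
  (∀ c : C, (TensorProduct.rid k C) ((TensorProduct.map LinearMap.id εC) (ΔC c)) = c)

/-- `C` is an `H`-module coalgebra: `Δ(hc) = h⁽¹⁾c⁽¹⁾ ⊗ h⁽²⁾c⁽²⁾` and
`ε(hc) = ε(h)ε(c)`. -/
def IsModCoalg (Δ : H →ₗ[k] H ⊗[k] H) (ε : H →ₗ[k] k)
    (ΔC : C →ₗ[k] C ⊗[k] C) (εC : C →ₗ[k] k)
    (actC : H →ₗ[k] C →ₗ[k] C) : Prop :=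
  (∀ (h : H) (c : C) (s : Finset ℕ) (a b : ℕ → H)
      (u : Finset ℕ) (c1 c2 : ℕ → C),
    Δ h = ∑ i ∈ s, a i ⊗ₜ b i →
    ΔC c = ∑ j ∈ u, c1 j ⊗ₜ c2 j →
    ΔC (actC h c) = ∑ i ∈ s, ∑ j ∈ u,
      actC (a i) (c1 j) ⊗ₜ actC (b i) (c2 j)) ∧
  (∀ (h : H) (c : C), εC (actC h c) = ε h * εC c)




variable (C : Type) [AddCommGroup C] [Module k C]
variable {M : Type} [AddCommGroup M] [Module k M]

/-- The `(n+1)`-fold tensor power `C^{⊗(n+1)}` (as a bundled module). -/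
noncomputable def Tpow : ℕ → ModuleCat.{0} k
  | 0 => ModuleCat.of k C
  | n + 1 => ModuleCat.of k (C ⊗[k] ↥(Tpow n))

variable {C}

/-- Appending a factor at the end: `(c_1 ⊗ ⋯ ⊗ c_n) ⊗ c ↦ c_1 ⊗ ⋯ ⊗ c_n ⊗ c`. -/
noncomputable def snoc :
    (n : ℕ) → (↥(Tpow (k := k) C n) ⊗[k] C →ₗ[k] ↥(Tpow (k := k) C (n+1)))
  | 0 => LinearMap.id
  | n + 1 =>
    (TensorProduct.map LinearMap.id (snoc n)) ∘ₗ
      (TensorProduct.assoc k C ↥(Tpow (k := k) C n) C).toLinearMap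

/-- The diagonal action of `H` on `C^{⊗(n+1)}`:
`h (c_0 ⊗ ⋯ ⊗ c_n) = h⁽¹⁾c_0 ⊗ ⋯ ⊗ h⁽ⁿ⁺¹⁾c_n`. -/
noncomputable def dAct (Δ : H →ₗ[k] H ⊗[k] H) (actC : H →ₗ[k] C →ₗ[k] C) :
    (n : ℕ) → (H ⊗[k] ↥(Tpow (k := k) C n) →ₗ[k] ↥(Tpow (k := k) C n))
  | 0 => TensorProduct.lift actC
  | n + 1 =>
    (TensorProduct.map (TensorProduct.lift actC) (dAct Δ actC n)) ∘ₗ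
      (TensorProduct.tensorTensorTensorComm k H H C ↥(Tpow (k := k) C n)).toLinearMap ∘ₗ
      (TensorProduct.map Δ LinearMap.id)

/-- The cyclic operator `τ_n (m ⊗ c_0 ⊗ ⋯ ⊗ c_n) =
m⁽⁰⁾ ⊗ c_1 ⊗ ⋯ ⊗ c_n ⊗ m⁽⁻¹⁾ c_0` on `M ⊗ C^{⊗(n+1)}`. -/
noncomputable def cyc (actC : H →ₗ[k] C →ₗ[k] C) (coactM : M →ₗ[k] H ⊗[k] M) :
    (n : ℕ) → (M ⊗[k] ↥(Tpow (k := k) C n) →ₗ[k] M ⊗[k] ↥(Tpow (k := k) C n))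
  | 0 =>
    (TensorProduct.map LinearMap.id (TensorProduct.lift actC)) ∘ₗ
      (TensorProduct.assoc k M H C).toLinearMap ∘ₗ
      (TensorProduct.map ((TensorProduct.comm k H M).toLinearMap ∘ₗ coactM) LinearMap.id)
  | n + 1 =>
    (TensorProduct.map LinearMap.id
        ((snoc (n := n)) ∘ₗ (TensorProduct.comm k C ↥(Tpow (k := k) C n)).toLinearMap)) ∘ₗ
      (TensorProduct.leftComm k C M ↥(Tpow (k := k) C n)).toLinearMap ∘ₗ
      (TensorProduct.map (TensorProduct.lift actC) LinearMap.id) ∘ₗ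
      (TensorProduct.tensorTensorTensorComm k H M C ↥(Tpow (k := k) C n)).toLinearMap ∘ₗ
      (TensorProduct.map coactM LinearMap.id)

/-- The subspace of `M ⊗ C^{⊗(n+1)}` spanned by the relations defining
the balanced tensor product `M ⊗_H C^{⊗(n+1)}` (for a right action on `M`
in curried form and the diagonal action on `C^{⊗(n+1)}`). -/
noncomputable def rel (Δ : H →ₗ[k] H ⊗[k] H) (actC : H →ₗ[k] C →ₗ[k] C)
    (actM : H →ₗ[k] M →ₗ[k] M) (n : ℕ) :
    Submodule k (M ⊗[k] ↥(Tpow (k := k) C n)) :=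
  Submodule.span k
    {z | ∃ (h : H) (m : M) (x : ↥(Tpow (k := k) C n)),
      z = (actM h m) ⊗ₜ x - m ⊗ₜ (dAct Δ actC n (h ⊗ₜ x))}


end HC

namespace HC

variable {k : Type} [Field k]
variable {H : Type} [Ring H] [Algebra k H]
variable {C : Type} [AddCommGroup C] [Module k C]
variable {M : Type} [AddCommGroup M] [Module k M]

/-- Comultiplication at slot `i`: `c_0 ⊗ ⋯ ⊗ c_n ↦ c_0 ⊗ ⋯ ⊗ c_i⁽¹⁾ ⊗ c_i⁽²⁾ ⊗ ⋯ ⊗ c_n`. -/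
noncomputable def coface (ΔC : C →ₗ[k] C ⊗[k] C) :
    (n : ℕ) → (i : ℕ) → (↥(Tpow (k := k) C n) →ₗ[k] ↥(Tpow (k := k) C (n+1)))
  | 0, _ => ΔC
  | n+1, 0 =>
    (TensorProduct.assoc k C C ↥(Tpow (k := k) C n)).toLinearMap ∘ₗ
      (TensorProduct.map ΔC LinearMap.id)
  | n+1, i+1 => TensorProduct.map LinearMap.id (coface ΔC n i)

/-- Counit at slot `j`: `c_0 ⊗ ⋯ ⊗ c_{n+1} ↦ ε(c_j) c_0 ⊗ ⋯ ĉ_j ⋯ ⊗ c_{n+1}`. -/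
noncomputable def dropC (εC : C →ₗ[k] k) :
    (n : ℕ) → (j : ℕ) → (↥(Tpow (k := k) C (n+1)) →ₗ[k] ↥(Tpow (k := k) C n))
  | n, 0 =>
    (TensorProduct.lid k ↥(Tpow (k := k) C n)).toLinearMap ∘ₗ
      (TensorProduct.map εC LinearMap.id)
  | 0, _+1 =>
    (TensorProduct.lid k C).toLinearMap ∘ₗ (TensorProduct.map εC LinearMap.id)
  | n+1, j+1 => TensorProduct.map LinearMap.id (dropC εC n j)

/-- The face maps `δ_i : M ⊗ C^{⊗(n+1)} → M ⊗ C^{⊗(n+2)}`, `0 ≤ i ≤ n+1`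
(the last one being the flip-over face `δ_{n+1} = τ_{n+1} ∘ δ_0`). -/
noncomputable def faceMap (ΔC : C →ₗ[k] C ⊗[k] C) (actC : H →ₗ[k] C →ₗ[k] C)
    (coactM : M →ₗ[k] H ⊗[k] M) (n i : ℕ) :
    M ⊗[k] ↥(Tpow (k := k) C n) →ₗ[k] M ⊗[k] ↥(Tpow (k := k) C (n+1)) :=
  if i = n + 1 then
    (cyc actC coactM (n+1)) ∘ₗ (TensorProduct.map LinearMap.id (coface ΔC n 0))
  else TensorProduct.map LinearMap.id (coface ΔC n i)

/-- The degeneracy maps `σ_i : M ⊗ C^{⊗(n+2)} → M ⊗ C^{⊗(n+1)}`, `0 ≤ i ≤ n`,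
applying the counit in slot `i+1`. -/
noncomputable def degenMap (εC : C →ₗ[k] k) (n i : ℕ) :
    M ⊗[k] ↥(Tpow (k := k) C (n+1)) →ₗ[k] M ⊗[k] ↥(Tpow (k := k) C n) :=
  TensorProduct.map LinearMap.id (dropC εC n (i+1))

end HC


namespace HC

variable {k : Type} [Field k]
variable {H : Type} [Ring H] [Algebra k H]
variable {M : Type} [AddCommGroup M] [Module k M]

section AlgSide

variable {A : Type} [Ring A] [Algebra k A]

/-- Splitting off the last tensor factor: `A^{⊗(n+2)} ≅ A^{⊗(n+1)} ⊗ A`. -/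
noncomputable def unsnoc {C : Type} [AddCommGroup C] [Module k C] :
    (n : ℕ) → (↥(Tpow (k := k) C (n+1)) ≃ₗ[k] ↥(Tpow (k := k) C n) ⊗[k] C)
  | 0 => LinearEquiv.refl k (C ⊗[k] C)
  | n + 1 =>
    (TensorProduct.congr (LinearEquiv.refl k C) (unsnoc n)).trans
      (TensorProduct.assoc k C ↥(Tpow (k := k) C n) C).symm

/-- Multiplication of the adjacent slots `i, i+1`. -/
noncomputable def mulAt :
    (n : ℕ) → (i : ℕ) → (↥(Tpow (k := k) A (n+1)) →ₗ[k] ↥(Tpow (k := k) A n))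
  | 0, _ => LinearMap.mul' k A
  | n+1, 0 =>
    (TensorProduct.map (LinearMap.mul' k A) LinearMap.id) ∘ₗ
      (TensorProduct.assoc k A A ↥(Tpow (k := k) A n)).symm.toLinearMap
  | n+1, i+1 => TensorProduct.map LinearMap.id (mulAt n i)

/-- The cyclic rotation `a_0 ⊗ ⋯ ⊗ a_n ↦ a_n ⊗ a_0 ⊗ ⋯ ⊗ a_{n-1}`. -/
noncomputable def rot : (n : ℕ) → (↥(Tpow (k := k) A n) →ₗ[k] ↥(Tpow (k := k) A n))
  | 0 => LinearMap.id
  | n + 1 =>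
    (TensorProduct.comm k ↥(Tpow (k := k) A n) A).toLinearMap ∘ₗ
      (unsnoc n).toLinearMap

/-- The face operators of the ordinary cyclic cochain complex of `A`. -/
noncomputable def Dord (n i : ℕ) (f : ↥(Tpow (k := k) A n) →ₗ[k] k) :
    ↥(Tpow (k := k) A (n+1)) →ₗ[k] k :=
  if i = n + 1 then f ∘ₗ (mulAt n 0) ∘ₗ (rot (n+1)) else f ∘ₗ mulAt n i

/-- The Hochschild coboundary of the ordinary cyclic complex of `A`. -/
noncomputable def bord (n : ℕ) (f : ↥(Tpow (k := k) A n) →ₗ[k] k) :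
    ↥(Tpow (k := k) A (n+1)) →ₗ[k] k :=
  ∑ i ∈ Finset.range (n + 2), ((-1 : k) ^ i) • Dord n i f

/-- `A` is a left `H`-module algebra. -/
def IsModAlg (Δ : H →ₗ[k] H ⊗[k] H) (ε : H →ₗ[k] k)
    (actA : H →ₗ[k] A →ₗ[k] A) : Prop :=
  (∀ (h : H) (x y : A) (s : Finset ℕ) (p q : ℕ → H),
    Δ h = ∑ i ∈ s, p i ⊗ₜ q i →
    actA h (x * y) = ∑ i ∈ s, actA (p i) x * actA (q i) y) ∧
  (∀ h : H, actA h 1 = ε h • (1 : A))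

/-- The right `H`-action `(m ⊗ ã) h = m h⁽¹⁾ ⊗ S(h⁽²⁾) ã` on `M ⊗ A^{⊗(n+1)}`. -/
noncomputable def rAct (Δ : H →ₗ[k] H ⊗[k] H) (S : H →ₗ[k] H)
    (actA : H →ₗ[k] A →ₗ[k] A) (actM : H →ₗ[k] M →ₗ[k] M) (n : ℕ) :
    (M ⊗[k] ↥(Tpow (k := k) A n)) ⊗[k] H →ₗ[k] M ⊗[k] ↥(Tpow (k := k) A n) :=
  (TensorProduct.map (TensorProduct.lift (LinearMap.flip actM))
      ((dAct Δ actA n) ∘ₗ (TensorProduct.map S LinearMap.id) ∘ₗ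
        (TensorProduct.comm k ↥(Tpow (k := k) A n) H).toLinearMap)) ∘ₗ
    (TensorProduct.tensorTensorTensorComm k M ↥(Tpow (k := k) A n) H H).toLinearMap ∘ₗ
    (TensorProduct.map LinearMap.id Δ)

/-- `H`-equivariance of a functional on `M ⊗ A^{⊗(n+1)}`. -/
def EquivFn (Δ : H →ₗ[k] H ⊗[k] H) (ε : H →ₗ[k] k) (S : H →ₗ[k] H)
    (actA : H →ₗ[k] A →ₗ[k] A) (actM : H →ₗ[k] M →ₗ[k] M) (n : ℕ)
    (f : M ⊗[k] ↥(Tpow (k := k) A n) →ₗ[k] k) : Prop :=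
  ∀ (z : M ⊗[k] ↥(Tpow (k := k) A n)) (h : H),
    f (rAct Δ S actA actM n (z ⊗ₜ h)) = ε h * f z

end AlgSide

section Pairing

variable {C : Type} [AddCommGroup C] [Module k C]
variable {A : Type} [Ring A] [Algebra k A]

/-- The evaluation `A^{⊗(n+1)}`-multilinear pairing
`(c_0 ⊗ ⋯ ⊗ c_n) ⊗ (a_0 ⊗ ⋯ ⊗ a_n) ↦ (c_0 a_0)(c_1 a_1)⋯(c_n a_n)`
induced by an action `C ⊗ A → A`. -/
noncomputable def ev (actCA : C →ₗ[k] A →ₗ[k] A) :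
    (n : ℕ) → (↥(Tpow (k := k) C n) ⊗[k] ↥(Tpow (k := k) A n) →ₗ[k] A)
  | 0 => TensorProduct.lift actCA
  | n + 1 =>
    (LinearMap.mul' k A) ∘ₗ
      (TensorProduct.map (TensorProduct.lift actCA) (ev actCA n)) ∘ₗ
      (TensorProduct.tensorTensorTensorComm k C ↥(Tpow (k := k) C n) A
        ↥(Tpow (k := k) A n)).toLinearMap

/-- The pairing `(x, f) ↦ x # f`:
`((m ⊗ c_0 ⊗ ⋯ ⊗ c_n) # f)(a_0 ⊗ ⋯ ⊗ a_n) = f(m ⊗ (c_0a_0)⋯(c_na_n))`. -/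
noncomputable def pairFn (actCA : C →ₗ[k] A →ₗ[k] A) (n : ℕ)
    (f : M ⊗[k] A →ₗ[k] k) (x : M ⊗[k] ↥(Tpow (k := k) C n)) :
    ↥(Tpow (k := k) A n) →ₗ[k] k :=
  (TensorProduct.curry
    (f ∘ₗ (TensorProduct.map LinearMap.id (ev actCA n)) ∘ₗ
      (TensorProduct.assoc k M ↥(Tpow (k := k) C n) ↥(Tpow (k := k) A n)).toLinearMap)) x

/-- The Hochschild boundary `b = ∑ (-1)^i δ_i` of the Hopf-cyclic complex of a
module coalgebra with coefficients. -/
noncomputable def bC (ΔC : C →ₗ[k] C ⊗[k] C) (actC : H →ₗ[k] C →ₗ[k] C)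
    (coactM : M →ₗ[k] H ⊗[k] M) (n : ℕ) :
    M ⊗[k] ↥(Tpow (k := k) C n) →ₗ[k] M ⊗[k] ↥(Tpow (k := k) C (n+1)) :=
  ∑ i ∈ Finset.range (n + 2), ((-1 : k) ^ i) • faceMap ΔC actC coactM n i

end Pairing

end HC

namespace HC

variable {k : Type} [Field k]
variable {H : Type} [Ring H] [Algebra k H]
variable {M : Type} [AddCommGroup M] [Module k M]
variable {A : Type} [Ring A] [Algebra k A]

/-- The twisted cyclic operator
`m ⊗ a_0 ⊗ ⋯ ⊗ a_n ↦ m⁽⁰⁾ ⊗ (S⁻¹(m⁽⁻¹⁾) a_n) ⊗ a_0 ⊗ ⋯ ⊗ a_{n-1}`. -/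
noncomputable def cycA (Sinv : H →ₗ[k] H) (actA : H →ₗ[k] A →ₗ[k] A)
    (coactM : M →ₗ[k] H ⊗[k] M) :
    (n : ℕ) → (M ⊗[k] ↥(Tpow (k := k) A n) →ₗ[k] M ⊗[k] ↥(Tpow (k := k) A n))
  | 0 =>
    (TensorProduct.map LinearMap.id (TensorProduct.lift actA)) ∘ₗ
      (TensorProduct.assoc k M H A).toLinearMap ∘ₗ
      (TensorProduct.map
        (((TensorProduct.comm k H M).toLinearMap) ∘ₗ
          (TensorProduct.map Sinv LinearMap.id) ∘ₗ coactM) LinearMap.id)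
  | n + 1 =>
    (TensorProduct.map LinearMap.id
        (TensorProduct.comm k ↥(Tpow (k := k) A n) A).toLinearMap) ∘ₗ
      (TensorProduct.assoc k M ↥(Tpow (k := k) A n) A).toLinearMap ∘ₗ
      (TensorProduct.map LinearMap.id (TensorProduct.lift actA)) ∘ₗ
      (TensorProduct.tensorTensorTensorComm k M H
        ↥(Tpow (k := k) A n) A).toLinearMap ∘ₗ
      (TensorProduct.map
        (((TensorProduct.comm k H M).toLinearMap) ∘ₗ
          (TensorProduct.map Sinv LinearMap.id) ∘ₗ coactM) LinearMap.id) ∘ₗ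
      (TensorProduct.map LinearMap.id (unsnoc n).toLinearMap)

/-- Face operators on the Hopf-cyclic cochain complex of the module algebra `A`. -/
noncomputable def Dop (Sinv : H →ₗ[k] H) (actA : H →ₗ[k] A →ₗ[k] A)
    (coactM : M →ₗ[k] H ⊗[k] M) (n i : ℕ)
    (f : M ⊗[k] ↥(Tpow (k := k) A n) →ₗ[k] k) :
    M ⊗[k] ↥(Tpow (k := k) A (n+1)) →ₗ[k] k :=
  if i = n + 1 then
    f ∘ₗ (TensorProduct.map LinearMap.id (mulAt n 0)) ∘ₗ cycA Sinv actA coactM (n+1)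
  else f ∘ₗ (TensorProduct.map LinearMap.id (mulAt n i))

/-- The cyclic operator on cochains of the module algebra `A`. -/
noncomputable def Top (Sinv : H →ₗ[k] H) (actA : H →ₗ[k] A →ₗ[k] A)
    (coactM : M →ₗ[k] H ⊗[k] M) (n : ℕ)
    (f : M ⊗[k] ↥(Tpow (k := k) A n) →ₗ[k] k) :
    M ⊗[k] ↥(Tpow (k := k) A n) →ₗ[k] k :=
  f ∘ₗ cycA Sinv actA coactM n

end HC

open HC TensorProduct

namespace HCAux

open TensorProduct

variable {k : Type} [Field k]

lemma exists_nat_repr {P Q : Type} [AddCommGroup P] [Module k P]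
    [AddCommGroup Q] [Module k Q] (z : P ⊗[k] Q) :
    ∃ (u : Finset ℕ) (p : ℕ → P) (q : ℕ → Q), z = ∑ i ∈ u, p i ⊗ₜ q i := by
  induction z using TensorProduct.induction_on with
  | zero => exact ⟨∅, 0, 0, by simp⟩
  | tmul p q => exact ⟨{0}, fun _ => p, fun _ => q, by simp⟩
  | add x y hx hy =>
    obtain ⟨u, p, q, hu⟩ := hx
    obtain ⟨v, r, s, hv⟩ := hy
    refine ⟨u.image (fun i => 2*i) ∪ v.image (fun i => 2*i+1),
      fun i => if i % 2 = 0 then p (i/2) else r (i/2),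
      fun i => if i % 2 = 0 then q (i/2) else s (i/2), ?_⟩
    rw [Finset.sum_union, Finset.sum_image (fun _ _ _ _ h => by omega),
      Finset.sum_image (fun _ _ _ _ h => by omega)]
    · simp only [Nat.mul_mod_right, if_true, Nat.mul_div_cancel_left _ (by norm_num : 0 < 2)]
      have : ∀ i : ℕ, (2*i+1) % 2 = 1 := by omega
      simp only [this, Nat.succ_ne_self]
      have h2 : ∀ i : ℕ, (2*i+1) / 2 = i := by omega
      simp only [h2, hu, hv]
      simp
    · simp only [Finset.disjoint_left, Finset.mem_image]
      rintro a ⟨i, _, rfl⟩ ⟨j, _, hj⟩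
      omega

section Hopf

variable {H : Type} [Ring H] [HopfAlgebra k H]

local notation "S" => HopfAlgebra.antipode (R := k) (A := H)
local notation "Δ" => Coalgebra.comul (R := k) (A := H)
local notation "ε" => Coalgebra.counit (R := k) (A := H)

lemma sum_antipode_mul' {ι : Type} {h : H} {u : Finset ι} {p q : ι → H}
    (hrep : Δ h = ∑ i ∈ u, p i ⊗ₜ q i) :
    ∑ i ∈ u, S (p i) * q i = ε h • (1 : H) := by
  have := HopfAlgebra.mul_antipode_rTensor_comul_apply (R := k) h
  rw [hrep] at this
  simpa [map_sum, Algebra.smul_def] using this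

lemma sum_mul_antipode' {ι : Type} {h : H} {u : Finset ι} {p q : ι → H}
    (hrep : Δ h = ∑ i ∈ u, p i ⊗ₜ q i) :
    ∑ i ∈ u, p i * S (q i) = ε h • (1 : H) := by
  have := HopfAlgebra.mul_antipode_lTensor_comul_apply (R := k) h
  rw [hrep] at this
  simpa [map_sum, Algebra.smul_def] using this

lemma antipode_one' : S (1 : H) = 1 := by
  have := HopfAlgebra.mul_antipode_rTensor_comul_apply (R := k) (1 : H)
  rw [Bialgebra.comul_one, Algebra.TensorProduct.one_def] at this
  simpa using this

lemma sum_counit_smul {ι : Type} {h : H} {u : Finset ι} {p q : ι → H}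
    (hrep : Δ h = ∑ i ∈ u, p i ⊗ₜ q i) :
    ∑ i ∈ u, ε (p i) • q i = h := by
  have := Coalgebra.rTensor_counit_comul (R := k) h
  rw [hrep, map_sum] at this
  have := congrArg (TensorProduct.lid k H) this
  simpa [map_sum] using this

lemma sum_smul_counit {ι : Type} {h : H} {u : Finset ι} {p q : ι → H}
    (hrep : Δ h = ∑ i ∈ u, p i ⊗ₜ q i) :
    ∑ i ∈ u, ε (q i) • p i = h := by
  have := Coalgebra.lTensor_counit_comul (R := k) h
  rw [hrep, map_sum] at this
  have := congrArg (TensorProduct.rid k H) this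
  simpa [map_sum] using this

lemma coassoc_exchange {ι ι₂ ι₃ : Type} {h : H} {u : Finset ι} {p q : ι → H}
    {t : ι → Finset ι₂} {p1 p2 : ι → ι₂ → H}
    {s : ι → Finset ι₃} {q1 q2 : ι → ι₃ → H}
    (hrep : Δ h = ∑ i ∈ u, p i ⊗ₜ q i)
    (hp : ∀ i ∈ u, Δ (p i) = ∑ j ∈ t i, p1 i j ⊗ₜ p2 i j)
    (hq : ∀ i ∈ u, Δ (q i) = ∑ j ∈ s i, q1 i j ⊗ₜ q2 i j) :
    ∑ i ∈ u, ∑ j ∈ t i, p1 i j ⊗ₜ[k] (p2 i j ⊗ₜ[k] q i)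
      = ∑ i ∈ u, ∑ j ∈ s i, p i ⊗ₜ[k] (q1 i j ⊗ₜ[k] q2 i j) := by
  have h1 : (TensorProduct.assoc k H H H)
      ((Coalgebra.comul (R := k)).rTensor H (Δ h)) =
      ∑ i ∈ u, ∑ j ∈ t i, p1 i j ⊗ₜ (p2 i j ⊗ₜ q i) := by
    rw [hrep, map_sum, map_sum]
    refine Finset.sum_congr rfl fun i hi => ?_
    rw [LinearMap.rTensor_tmul, hp i hi, TensorProduct.sum_tmul, map_sum]
    simp
  have h2 : (Coalgebra.comul (R := k)).lTensor H (Δ h) =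
      ∑ i ∈ u, ∑ j ∈ s i, p i ⊗ₜ (q1 i j ⊗ₜ q2 i j) := by
    rw [hrep, map_sum]
    refine Finset.sum_congr rfl fun i hi => ?_
    rw [LinearMap.lTensor_tmul, hq i hi, TensorProduct.tmul_sum]
  rw [← h1, ← h2, Coalgebra.coassoc_apply]

/-- Apply a linear map to an equality of sums of triple tensors. -/
lemma sum_tensor_eq_apply {ι ι' : Type} {V P Q R : Type}
    [AddCommGroup V] [Module k V] [AddCommGroup P] [Module k P]
    [AddCommGroup Q] [Module k Q] [AddCommGroup R] [Module k R]
    {u : Finset ι} {u' : Finset ι'} {x1 : ι → P} {y1 : ι → Q} {z1 : ι → R}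
    {x2 : ι' → P} {y2 : ι' → Q} {z2 : ι' → R}
    (E : ∑ i ∈ u, x1 i ⊗ₜ[k] (y1 i ⊗ₜ[k] z1 i)
        = ∑ i ∈ u', x2 i ⊗ₜ[k] (y2 i ⊗ₜ[k] z2 i))
    (G : P ⊗[k] (Q ⊗[k] R) →ₗ[k] V) :
    ∑ i ∈ u, G (x1 i ⊗ₜ (y1 i ⊗ₜ z1 i)) = ∑ i ∈ u', G (x2 i ⊗ₜ (y2 i ⊗ₜ z2 i)) := by
  rw [← map_sum, ← map_sum, E]

/-- `(f₁ x * f₂ y) * f₃ z` as a linear map on `H ⊗ (H ⊗ H)`. -/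
noncomputable def tri3 (f₁ f₂ f₃ : H →ₗ[k] H) : H ⊗[k] (H ⊗[k] H) →ₗ[k] H :=
  (LinearMap.mul' k H) ∘ₗ
    (TensorProduct.map ((LinearMap.mul' k H) ∘ₗ TensorProduct.map f₁ f₂) f₃) ∘ₗ
    (TensorProduct.assoc k H H H).symm.toLinearMap

@[simp] lemma tri3_apply (f₁ f₂ f₃ : H →ₗ[k] H) (x y z : H) :
    tri3 f₁ f₂ f₃ (x ⊗ₜ (y ⊗ₜ z)) = (f₁ x * f₂ y) * f₃ z := by
  simp [tri3]

lemma sum_block_swap {α α' β β' : Type} {V : Type} [AddCommMonoid V]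
    (u : Finset α) (v : Finset β) (su : α → Finset α') (tv : β → Finset β')
    (f : α → α' → β → β' → V) :
    ∑ i ∈ u, ∑ j ∈ su i, ∑ κ ∈ v, ∑ l ∈ tv κ, f i j κ l
      = ∑ κ ∈ v, ∑ l ∈ tv κ, ∑ i ∈ u, ∑ j ∈ su i, f i j κ l := by
  calc ∑ i ∈ u, ∑ j ∈ su i, ∑ κ ∈ v, ∑ l ∈ tv κ, f i j κ l
      = ∑ i ∈ u, ∑ κ ∈ v, ∑ j ∈ su i, ∑ l ∈ tv κ, f i j κ l :=
        Finset.sum_congr rfl fun i _ => Finset.sum_comm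
    _ = ∑ κ ∈ v, ∑ i ∈ u, ∑ j ∈ su i, ∑ l ∈ tv κ, f i j κ l := Finset.sum_comm
    _ = ∑ κ ∈ v, ∑ i ∈ u, ∑ l ∈ tv κ, ∑ j ∈ su i, f i j κ l :=
        Finset.sum_congr rfl fun κ _ => Finset.sum_congr rfl fun i _ =>
          Finset.sum_comm
    _ = ∑ κ ∈ v, ∑ l ∈ tv κ, ∑ i ∈ u, ∑ j ∈ su i, f i j κ l :=
        Finset.sum_congr rfl fun κ _ => Finset.sum_comm

lemma sum_block_swap' {α α' β β' : Type} {V : Type} [AddCommMonoid V]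
    (u : Finset α) (v : Finset β) (su : α → Finset α') (tv : β → Finset β')
    (f : α → α' → β → β' → V) :
    ∑ κ ∈ v, ∑ i ∈ u, ∑ j ∈ su i, ∑ l ∈ tv κ, f i j κ l
      = ∑ i ∈ u, ∑ j ∈ su i, ∑ κ ∈ v, ∑ l ∈ tv κ, f i j κ l := by
  rw [Finset.sum_comm]
  exact Finset.sum_congr rfl fun i _ => Finset.sum_comm

lemma antipode_mul' (a b : H) : S (a * b) = S b * S a := by
  obtain ⟨u, a1, a2, ha⟩ := exists_nat_repr (Δ a)
  choose t a11 a12 ha1 using fun i => exists_nat_repr (Δ (a1 i))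
  choose s a21 a22 ha2 using fun i => exists_nat_repr (Δ (a2 i))
  obtain ⟨v, b1, b2, hb⟩ := exists_nat_repr (Δ b)
  choose t' b11 b12 hb1 using fun i => exists_nat_repr (Δ (b1 i))
  choose s' b21 b22 hb2 using fun i => exists_nat_repr (Δ (b2 i))
  have Ea := coassoc_exchange ha (fun i _ => ha1 i) (fun i _ => ha2 i)
  have Eb := coassoc_exchange hb (fun i _ => hb1 i) (fun i _ => hb2 i)
  have hprod : ∀ i κ, Δ (a1 i * b1 κ) =
      ∑ p ∈ t i ×ˢ t' κ, (a11 i p.1 * b11 κ p.2) ⊗ₜ[k] (a12 i p.1 * b12 κ p.2) := by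
    intro i κ
    rw [Bialgebra.comul_mul, ha1 i, hb1 κ, Finset.sum_mul_sum]
    rw [Finset.sum_product]
    simp [Algebra.TensorProduct.tmul_mul_tmul]
  have step1 : ∀ i κ, ∑ j ∈ t i, ∑ l ∈ t' κ,
      S (a11 i j * b11 κ l) * (a12 i j * b12 κ l)
        = (ε (a1 i) * ε (b1 κ)) • (1 : H) := by
    intro i κ
    have h0 := sum_antipode_mul' (hprod i κ)
    rw [Finset.sum_product, Bialgebra.counit_mul] at h0
    exact h0
  have hSa : S a = ∑ i ∈ u, ε (a1 i) • S (a2 i) := by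
    conv_lhs => rw [← sum_counit_smul ha]
    simp [map_sum]
  have hSb : S b = ∑ κ ∈ v, ε (b1 κ) • S (b2 κ) := by
    conv_lhs => rw [← sum_counit_smul hb]
    simp [map_sum]
  have claimA : S b * S a
      = ∑ κ ∈ v, ∑ i ∈ u, ∑ j ∈ t i, ∑ l ∈ t' κ,
          (S (a11 i j * b11 κ l) * (a12 i j * b12 κ l)) * (S (b2 κ) * S (a2 i)) := by
    rw [hSa, hSb, Finset.sum_mul_sum]
    refine Finset.sum_congr rfl fun κ _ => Finset.sum_congr rfl fun i _ => ?_
    simp only [← Finset.sum_mul]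
    rw [step1 i κ]
    simp only [smul_mul_assoc, mul_smul_comm, smul_smul, one_mul]
  set Gb : H ⊗[k] (H ⊗[k] H) →ₗ[k] H :=
    ∑ κ ∈ v, ∑ l ∈ t' κ, tri3 (S ∘ₗ LinearMap.mulRight k (b11 κ l))
      (LinearMap.mulRight k (b12 κ l)) (LinearMap.mulLeft k (S (b2 κ)) ∘ₗ S) with hGb
  have hGbApply : ∀ x y z : H, Gb (x ⊗ₜ (y ⊗ₜ z))
      = ∑ κ ∈ v, ∑ l ∈ t' κ, (S (x * b11 κ l) * (y * b12 κ l)) * (S (b2 κ) * S z) := by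
    intro x y z
    simp [hGb, LinearMap.sum_apply]
  have ex1 := congrArg Gb Ea
  simp only [map_sum, hGbApply] at ex1
  set Ga : H ⊗[k] (H ⊗[k] H) →ₗ[k] H :=
    ∑ i ∈ u, ∑ j ∈ s i, tri3 (S ∘ₗ LinearMap.mulLeft k (a1 i))
      (LinearMap.mulLeft k (a21 i j)) (LinearMap.mulRight k (S (a22 i j)) ∘ₗ S) with hGa
  have hGaApply : ∀ x y z : H, Ga (x ⊗ₜ (y ⊗ₜ z))
      = ∑ i ∈ u, ∑ j ∈ s i, (S (a1 i * x) * (a21 i j * y)) * (S z * S (a22 i j)) := by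
    intro x y z
    simp [hGa, LinearMap.sum_apply]
  have ex2 := congrArg Ga Eb
  simp only [map_sum, hGaApply] at ex2
  have claimB : S b * S a
      = ∑ κ ∈ v, ∑ l ∈ s' κ, ∑ i ∈ u, ∑ j ∈ s i,
          (S (a1 i * b1 κ) * (a21 i j * b21 κ l)) * (S (b22 κ l) * S (a22 i j)) := by
    rw [claimA, sum_block_swap' u v t t', ex1, sum_block_swap u v s t', ex2]
  rw [claimB, (sum_block_swap u v s s' _).symm]
  have inner : ∀ i j κ, ∑ l ∈ s' κ,
      (S (a1 i * b1 κ) * (a21 i j * b21 κ l)) * (S (b22 κ l) * S (a22 i j))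
        = ε (b2 κ) • (S (a1 i * b1 κ) * (a21 i j * S (a22 i j))) := by
    intro i j κ
    have hassoc : ∀ l, (S (a1 i * b1 κ) * (a21 i j * b21 κ l)) * (S (b22 κ l) * S (a22 i j))
        = S (a1 i * b1 κ) * (a21 i j * ((b21 κ l * S (b22 κ l)) * S (a22 i j))) := by
      intro l; simp only [mul_assoc]
    simp only [hassoc]
    rw [← Finset.mul_sum, ← Finset.mul_sum, ← Finset.sum_mul, sum_mul_antipode' (hb2 κ)]
    simp only [smul_mul_assoc, one_mul, mul_smul_comm]
  simp only [inner]
  have step3 : ∀ i, ∑ j ∈ s i, ∑ κ ∈ v,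
      ε (b2 κ) • (S (a1 i * b1 κ) * (a21 i j * S (a22 i j)))
        = ∑ κ ∈ v, (ε (b2 κ) * ε (a2 i)) • S (a1 i * b1 κ) := by
    intro i
    rw [Finset.sum_comm]
    refine Finset.sum_congr rfl fun κ _ => ?_
    rw [← Finset.smul_sum, ← Finset.mul_sum, sum_mul_antipode' (ha2 i)]
    simp only [mul_smul_comm, smul_smul, mul_one]
  simp only [step3]
  conv_lhs => rw [← sum_smul_counit ha, ← sum_smul_counit hb]
  rw [Finset.sum_mul_sum]
  simp only [map_sum]
  refine Finset.sum_congr rfl fun i _ => Finset.sum_congr rfl fun κ _ => ?_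
  simp only [smul_mul_assoc, mul_smul_comm, smul_smul, map_smul]


lemma sum_sinv_mul {ι : Type} (Sinv : H →ₗ[k] H)
    (hS : ∀ g : H, Sinv (S g) = g) (hS' : ∀ g : H, S (Sinv g) = g)
    {h : H} {u : Finset ι} {p q : ι → H}
    (hrep : Δ h = ∑ i ∈ u, p i ⊗ₜ q i) :
    ∑ i ∈ u, Sinv (q i) * p i = ε h • (1 : H) := by
  have hinj : Function.Injective (fun x : H => S x) := fun x y hxy => by
    have := congrArg Sinv hxy
    simpa [hS] using this
  apply hinj
  show S _ = S _
  rw [map_sum]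
  have hterm : ∀ i, S (Sinv (q i) * p i) = S (p i) * q i := fun i => by
    rw [antipode_mul', hS']
  simp only [hterm]
  rw [sum_antipode_mul' hrep, map_smul, antipode_one']

end Hopf

end HCAux

namespace HCAux2

open TensorProduct HC HCAux

variable {k : Type} [Field k]
variable {H : Type} [Ring H] [HopfAlgebra k H]
variable {M : Type} [AddCommGroup M] [Module k M]
variable {C : Type} [AddCommGroup C] [Module k C]
variable {A : Type} [Ring A] [Algebra k A]

local notation "S" => HopfAlgebra.antipode (R := k) (A := H)
local notation "Δ" => Coalgebra.comul (R := k) (A := H)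
local notation "ε" => Coalgebra.counit (R := k) (A := H)

section Structural

variable (actCA : C →ₗ[k] A →ₗ[k] A)

lemma ev_zero (c : C) (a : A) :
    ev actCA 0 (c ⊗ₜ a) = actCA c a := rfl

lemma ev_succ (n : ℕ) (c : C) (x : ↥(Tpow (k := k) C n)) (a : A)
    (y : ↥(Tpow (k := k) A n)) :
    ev actCA (n+1) ((c ⊗ₜ x) ⊗ₜ (a ⊗ₜ y)) = actCA c a * ev actCA n (x ⊗ₜ y) := rfl

lemma mulAt_zero (i : ℕ) (a b : A) :
    mulAt (k := k) 0 i (a ⊗ₜ b) = a * b := rfl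

lemma mulAt_succ_zero (n : ℕ) (a b : A) (y : ↥(Tpow (k := k) A n)) :
    mulAt (k := k) (n+1) 0 (a ⊗ₜ (b ⊗ₜ y)) = (a * b) ⊗ₜ y := rfl

lemma mulAt_succ_succ (n i : ℕ) (a : A) (y : ↥(Tpow (k := k) A (n+1))) :
    mulAt (k := k) (n+1) (i+1) (a ⊗ₜ y) = a ⊗ₜ mulAt (k := k) n i y := rfl

lemma coface_zero (ΔC : C →ₗ[k] C ⊗[k] C) (i : ℕ) (c : C) :
    coface (k := k) ΔC 0 i c = ΔC c := rfl

lemma coface_succ_zero (ΔC : C →ₗ[k] C ⊗[k] C) (n : ℕ) {ι : Type} {w : Finset ι}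
    {c1 c2 : ι → C} {c : C} (hrep : ΔC c = ∑ j ∈ w, c1 j ⊗ₜ c2 j)
    (x : ↥(Tpow (k := k) C n)) :
    coface (k := k) ΔC (n+1) 0 (c ⊗ₜ x) = ∑ j ∈ w, c1 j ⊗ₜ (c2 j ⊗ₜ x) := by
  have h1 : coface (k := k) ΔC (n+1) 0 (c ⊗ₜ x)
      = (TensorProduct.assoc k C C ↥(Tpow (k := k) C n)).toLinearMap (ΔC c ⊗ₜ x) := rfl
  rw [h1, hrep, TensorProduct.sum_tmul, map_sum]
  exact Finset.sum_congr rfl fun j _ => rfl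

lemma coface_succ_succ (ΔC : C →ₗ[k] C ⊗[k] C) (n i : ℕ) (c : C)
    (x : ↥(Tpow (k := k) C n)) :
    coface (k := k) ΔC (n+1) (i+1) (c ⊗ₜ x) = c ⊗ₜ coface (k := k) ΔC n i x := rfl

lemma dAct_zero (actC : H →ₗ[k] C →ₗ[k] C) (h : H) (c : C) :
    dAct (k := k) Δ actC 0 (h ⊗ₜ c) = actC h c := rfl

lemma dAct_succ (actC : H →ₗ[k] C →ₗ[k] C) (n : ℕ) {ι : Type} {u : Finset ι}
    {p q : ι → H} {h : H} (hrep : Δ h = ∑ i ∈ u, p i ⊗ₜ q i)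
    (c : C) (x : ↥(Tpow (k := k) C n)) :
    dAct (k := k) Δ actC (n+1) (h ⊗ₜ (c ⊗ₜ x))
      = ∑ i ∈ u, actC (p i) c ⊗ₜ dAct (k := k) Δ actC n (q i ⊗ₜ x) := by
  have h1 : dAct (k := k) Δ actC (n+1) (h ⊗ₜ (c ⊗ₜ x))
      = ((TensorProduct.map (TensorProduct.lift actC) (dAct (k := k) Δ actC n)) ∘ₗ
          (TensorProduct.tensorTensorTensorComm k H H C
            ↥(Tpow (k := k) C n)).toLinearMap) (Δ h ⊗ₜ (c ⊗ₜ x)) := rfl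
  rw [h1, hrep, TensorProduct.sum_tmul, map_sum]
  exact Finset.sum_congr rfl fun i _ => rfl

lemma snoc_zero (c' : C) (c : C) :
    snoc (k := k) 0 (c' ⊗ₜ c) = c' ⊗ₜ c := rfl

lemma snoc_succ (n : ℕ) (c₀ : C) (x : ↥(Tpow (k := k) C n)) (c : C) :
    snoc (k := k) (n+1) ((c₀ ⊗ₜ x) ⊗ₜ c) = c₀ ⊗ₜ snoc (k := k) n (x ⊗ₜ c) := rfl

lemma unsnoc_symm_zero (y : A) (a : A) :
    (unsnoc (k := k) (C := A) 0).symm (y ⊗ₜ a) = y ⊗ₜ a := rfl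

lemma unsnoc_symm_succ (n : ℕ) (a₀ : A) (y : ↥(Tpow (k := k) A n)) (a : A) :
    (unsnoc (k := k) (C := A) (n+1)).symm ((a₀ ⊗ₜ y) ⊗ₜ a)
      = a₀ ⊗ₜ (unsnoc (k := k) (C := A) n).symm (y ⊗ₜ a) := rfl

lemma rot_succ (n : ℕ) (y : ↥(Tpow (k := k) A n)) (a : A) :
    rot (k := k) (n+1) ((unsnoc (k := k) (C := A) n).symm (y ⊗ₜ a)) = a ⊗ₜ y := by
  have h1 : rot (k := k) (n+1) ((unsnoc (k := k) (C := A) n).symm (y ⊗ₜ a))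
      = (TensorProduct.comm k ↥(Tpow (k := k) A n) A)
          ((unsnoc (k := k) (C := A) n) ((unsnoc (k := k) (C := A) n).symm (y ⊗ₜ a))) := rfl
  rw [h1, LinearEquiv.apply_symm_apply]
  rfl

lemma cyc_zero_apply (actC : H →ₗ[k] C →ₗ[k] C) (coactM : M →ₗ[k] H ⊗[k] M)
    {ι : Type} {u : Finset ι} {e : ι → H} {m0 : ι → M} {m : M}
    (hrep : coactM m = ∑ l ∈ u, e l ⊗ₜ m0 l) (c : C) :
    cyc (k := k) actC coactM 0 (m ⊗ₜ c) = ∑ l ∈ u, m0 l ⊗ₜ actC (e l) c := by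
  have h1 : cyc (k := k) actC coactM 0 (m ⊗ₜ c)
      = ((TensorProduct.map LinearMap.id (TensorProduct.lift actC)) ∘ₗ
          (TensorProduct.assoc k M H C).toLinearMap ∘ₗ
          (TensorProduct.map (TensorProduct.comm k H M).toLinearMap LinearMap.id))
            (coactM m ⊗ₜ c) := rfl
  rw [h1, hrep, TensorProduct.sum_tmul, map_sum]
  exact Finset.sum_congr rfl fun l _ => rfl

lemma cyc_succ_apply (actC : H →ₗ[k] C →ₗ[k] C) (coactM : M →ₗ[k] H ⊗[k] M)
    (n : ℕ) {ι : Type} {u : Finset ι} {e : ι → H} {m0 : ι → M} {m : M}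
    (hrep : coactM m = ∑ l ∈ u, e l ⊗ₜ m0 l) (c : C) (x : ↥(Tpow (k := k) C n)) :
    cyc (k := k) actC coactM (n+1) (m ⊗ₜ (c ⊗ₜ x))
      = ∑ l ∈ u, m0 l ⊗ₜ snoc (k := k) n (x ⊗ₜ actC (e l) c) := by
  have h1 : cyc (k := k) actC coactM (n+1) (m ⊗ₜ (c ⊗ₜ x))
      = ((TensorProduct.map LinearMap.id
            ((snoc (k := k) (n := n)) ∘ₗ
              (TensorProduct.comm k C ↥(Tpow (k := k) C n)).toLinearMap)) ∘ₗ
          (TensorProduct.leftComm k C M ↥(Tpow (k := k) C n)).toLinearMap ∘ₗ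
          (TensorProduct.map (TensorProduct.lift actC) LinearMap.id) ∘ₗ
          (TensorProduct.tensorTensorTensorComm k H M C
            ↥(Tpow (k := k) C n)).toLinearMap)
            (coactM m ⊗ₜ (c ⊗ₜ x)) := rfl
  rw [h1, hrep, TensorProduct.sum_tmul, map_sum]
  exact Finset.sum_congr rfl fun l _ => rfl

lemma pairFn_apply (f : M ⊗[k] ↥(Tpow (k := k) A 0) →ₗ[k] k) (n : ℕ)
    (m : M) (x : ↥(Tpow (k := k) C n)) (y : ↥(Tpow (k := k) A n)) :
    pairFn (M := M) actCA n f (m ⊗ₜ x) y = f (m ⊗ₜ ev actCA n (x ⊗ₜ y)) := rfl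

lemma rAct_zero_apply (actA : H →ₗ[k] A →ₗ[k] A) (actM : H →ₗ[k] M →ₗ[k] M)
    {ι : Type} {u : Finset ι} {p q : ι → H} {h : H}
    (hrep : Δ h = ∑ i ∈ u, p i ⊗ₜ q i) (m : M) (b : A) :
    rAct (k := k) Δ S actA actM 0 ((m ⊗ₜ b) ⊗ₜ h)
      = ∑ i ∈ u, actM (p i) m ⊗ₜ actA (S (q i)) b := by
  have h1 : rAct (k := k) Δ S actA actM 0 ((m ⊗ₜ b) ⊗ₜ h)
      = ((TensorProduct.map (TensorProduct.lift (LinearMap.flip actM))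
            ((dAct (k := k) Δ actA 0) ∘ₗ
              (TensorProduct.map S LinearMap.id) ∘ₗ
              (TensorProduct.comm k ↥(Tpow (k := k) A 0) H).toLinearMap)) ∘ₗ
          (TensorProduct.tensorTensorTensorComm k M ↥(Tpow (k := k) A 0) H
            H).toLinearMap) ((m ⊗ₜ b) ⊗ₜ Δ h) := rfl
  rw [h1, hrep, TensorProduct.tmul_sum, map_sum]
  exact Finset.sum_congr rfl fun i _ => rfl

lemma cycA_one_apply (Sinv : H →ₗ[k] H) (actA : H →ₗ[k] A →ₗ[k] A)
    (coactM : M →ₗ[k] H ⊗[k] M) {ι : Type} {u : Finset ι} {e : ι → H}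
    {m0 : ι → M} {m : M} (hrep : coactM m = ∑ l ∈ u, e l ⊗ₜ m0 l) (a b : A) :
    cycA (k := k) Sinv actA coactM 1 (m ⊗ₜ (a ⊗ₜ b))
      = ∑ l ∈ u, m0 l ⊗ₜ (actA (Sinv (e l)) b ⊗ₜ a : ↥(Tpow (k := k) A 1)) := by
  have h1 : cycA (k := k) Sinv actA coactM 1 (m ⊗ₜ (a ⊗ₜ b))
      = ((TensorProduct.map LinearMap.id
            (TensorProduct.comm k ↥(Tpow (k := k) A 0) A).toLinearMap) ∘ₗ
          (TensorProduct.assoc k M ↥(Tpow (k := k) A 0) A).toLinearMap ∘ₗ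
          (TensorProduct.map LinearMap.id (TensorProduct.lift actA)) ∘ₗ
          (TensorProduct.tensorTensorTensorComm k M H ↥(Tpow (k := k) A 0)
            A).toLinearMap ∘ₗ
          (TensorProduct.map ((TensorProduct.comm k H M).toLinearMap ∘ₗ
            (TensorProduct.map Sinv LinearMap.id)) LinearMap.id))
            ((coactM m) ⊗ₜ (a ⊗ₜ b)) := rfl
  rw [h1, hrep, TensorProduct.sum_tmul, map_sum]
  exact Finset.sum_congr rfl fun l _ => rfl

lemma cycA_zero_apply (Sinv : H →ₗ[k] H) (actA : H →ₗ[k] A →ₗ[k] A)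
    (coactM : M →ₗ[k] H ⊗[k] M) {ι : Type} {u : Finset ι} {e : ι → H}
    {m0 : ι → M} {m : M} (hrep : coactM m = ∑ l ∈ u, e l ⊗ₜ m0 l) (a : A) :
    cycA (k := k) Sinv actA coactM 0 (m ⊗ₜ a)
      = ∑ l ∈ u, m0 l ⊗ₜ actA (Sinv (e l)) a := by
  have h1 : cycA (k := k) Sinv actA coactM 0 (m ⊗ₜ a)
      = ((TensorProduct.map LinearMap.id (TensorProduct.lift actA)) ∘ₗ
          (TensorProduct.assoc k M H A).toLinearMap ∘ₗ
          (TensorProduct.map ((TensorProduct.comm k H M).toLinearMap ∘ₗ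
            (TensorProduct.map Sinv LinearMap.id)) LinearMap.id))
            ((coactM m) ⊗ₜ a) := rfl
  rw [h1, hrep, TensorProduct.sum_tmul, map_sum]
  exact Finset.sum_congr rfl fun l _ => rfl

end Structural

section Core

variable (actC : H →ₗ[k] C →ₗ[k] C) (actA : H →ₗ[k] A →ₗ[k] A)
variable (actM : H →ₗ[k] M →ₗ[k] M) (coactM : M →ₗ[k] H ⊗[k] M)
variable (actCA : C →ₗ[k] A →ₗ[k] A)
variable (f : M ⊗[k] ↥(Tpow (k := k) A 0) →ₗ[k] k)

/-- Induction principle for `Tpow C (n+1)`. -/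
lemma tpow_succ_induction (n : ℕ) {P : ↥(Tpow (k := k) C (n+1)) → Prop}
    (h0 : P 0) (htmul : ∀ (c : C) (x : ↥(Tpow (k := k) C n)), P (c ⊗ₜ x))
    (hadd : ∀ x y, P x → P y → P (x + y)) : ∀ x, P x := fun x =>
  TensorProduct.induction_on x h0 htmul hadd

lemma pairFn_zero (n : ℕ) : pairFn (M := M) actCA n f 0 = 0 :=
  map_zero (TensorProduct.curry _)

lemma pairFn_add (n : ℕ) (x y : M ⊗[k] ↥(Tpow (k := k) C n)) :
    pairFn (M := M) actCA n f (x + y)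
      = pairFn (M := M) actCA n f x + pairFn (M := M) actCA n f y :=
  map_add (TensorProduct.curry _) x y

lemma pairFn_smul (n : ℕ) (c : k) (x : M ⊗[k] ↥(Tpow (k := k) C n)) :
    pairFn (M := M) actCA n f (c • x) = c • pairFn (M := M) actCA n f x :=
  map_smul (TensorProduct.curry _) c x

lemma pairFn_sub (n : ℕ) (x y : M ⊗[k] ↥(Tpow (k := k) C n)) :
    pairFn (M := M) actCA n f (x - y)
      = pairFn (M := M) actCA n f x - pairFn (M := M) actCA n f y :=
  map_sub (TensorProduct.curry _) x y

lemma pairFn_sum (n : ℕ) {ι : Type} (w : Finset ι)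
    (g : ι → M ⊗[k] ↥(Tpow (k := k) C n)) :
    pairFn (M := M) actCA n f (∑ i ∈ w, g i)
      = ∑ i ∈ w, pairFn (M := M) actCA n f (g i) :=
  map_sum (TensorProduct.curry _) g w

lemma coact_counit (hco : IsLCoact (k := k) Δ ε coactM) {ι : Type} {u : Finset ι}
    {e : ι → H} {m0 : ι → M} {m : M} (hrep : coactM m = ∑ l ∈ u, e l ⊗ₜ m0 l) :
    ∑ l ∈ u, ε (e l) • m0 l = m := by
  have h2 := hco.2 m
  rw [hrep] at h2
  simpa [map_sum] using h2

lemma coact_coassoc (hco : IsLCoact (k := k) Δ ε coactM) {m : M}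
    {ι : Type} {u : Finset ι} {e : ι → H} {m0 : ι → M}
    (hrep : coactM m = ∑ l ∈ u, e l ⊗ₜ m0 l)
    {ι₂ : Type} {t : ι → Finset ι₂} {e1 e2 : ι → ι₂ → H}
    (he : ∀ l ∈ u, Δ (e l) = ∑ j ∈ t l, e1 l j ⊗ₜ e2 l j)
    {ι₃ : Type} {s : ι → Finset ι₃} {g : ι → ι₃ → H} {m' : ι → ι₃ → M}
    (hm : ∀ l ∈ u, coactM (m0 l) = ∑ j ∈ s l, g l j ⊗ₜ m' l j) :
    ∑ l ∈ u, ∑ j ∈ t l, (e1 l j ⊗ₜ[k] e2 l j) ⊗ₜ[k] m0 l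
      = ∑ l ∈ u, ∑ j ∈ s l, (e l ⊗ₜ[k] g l j) ⊗ₜ[k] m' l j := by
  have key := LinearMap.congr_fun hco.1 m
  simp only [LinearMap.coe_comp, Function.comp_apply, LinearEquiv.coe_coe] at key
  have lhs : (TensorProduct.map Δ LinearMap.id) (coactM m)
      = ∑ l ∈ u, ∑ j ∈ t l, (e1 l j ⊗ₜ[k] e2 l j) ⊗ₜ[k] m0 l := by
    rw [hrep, map_sum]
    refine Finset.sum_congr rfl fun l hl => ?_
    rw [TensorProduct.map_tmul, he l hl, TensorProduct.sum_tmul]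
    simp
  have rhs : (TensorProduct.assoc k H H M).symm
        ((TensorProduct.map LinearMap.id coactM) (coactM m))
      = ∑ l ∈ u, ∑ j ∈ s l, (e l ⊗ₜ[k] g l j) ⊗ₜ[k] m' l j := by
    rw [hrep, map_sum, map_sum]
    refine Finset.sum_congr rfl fun l hl => ?_
    rw [TensorProduct.map_tmul, hm l hl, TensorProduct.tmul_sum, map_sum]
    simp
  rw [← lhs, ← rhs]
  exact key

lemma f_equiv_move (hfequiv : EquivFn (k := k) Δ ε S actA actM 0 f)
    (hactA : IsLAct (k := k) actA) (h : H) (m : M) (a : A) :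
    f (actM h m ⊗ₜ a) = f (m ⊗ₜ actA h a) := by
  obtain ⟨u, p, q, hu⟩ := exists_nat_repr (Δ h)
  choose t r s hrs using fun i => exists_nat_repr (Δ (p i))
  choose t' r' s' hrs' using fun i => exists_nat_repr (Δ (q i))
  have E := coassoc_exchange hu (fun i _ => hrs i) (fun i _ => hrs' i)
  set G : H ⊗[k] (H ⊗[k] H) →ₗ[k] k :=
    f ∘ₗ (TensorProduct.map ((LinearMap.flip actM) m)
      ((LinearMap.flip actA) a ∘ₗ (LinearMap.mul' k H) ∘ₗ
        (TensorProduct.map S LinearMap.id))) with hG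
  have hGapp : ∀ x y z : H, G (x ⊗ₜ (y ⊗ₜ z)) = f (actM x m ⊗ₜ actA (S y * z) a) := by
    intro x y z
    rfl
  have ex := congrArg G E
  simp only [map_sum, hGapp] at ex
  have key2 : ∀ i, f (rAct (k := k) Δ S actA actM 0 ((m ⊗ₜ actA (q i) a) ⊗ₜ p i))
      = ∑ j ∈ t i, f (actM (r i j) m ⊗ₜ actA (S (s i j) * q i) a) := by
    intro i
    erw [rAct_zero_apply actA actM (hrs i), map_sum]
    refine Finset.sum_congr rfl fun j _ => ?_
    have : actA (S (s i j) * q i) a = actA (S (s i j)) (actA (q i) a) := by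
      rw [hactA.2]; rfl
    rw [this]
    rfl
  have lhs_eq : ∑ i ∈ u, ε (p i) * f (m ⊗ₜ actA (q i) a) = f (m ⊗ₜ actA h a) := by
    conv_rhs => rw [← sum_counit_smul hu]
    simp [map_sum, LinearMap.sum_apply, TensorProduct.tmul_sum, map_smul,
      LinearMap.smul_apply, TensorProduct.tmul_smul, smul_eq_mul]
    erw [TensorProduct.tmul_sum, map_sum]
    refine Finset.sum_congr rfl fun i _ => ?_
    erw [TensorProduct.tmul_smul (R := k) (R' := k) (M := M) (N := ↥(Tpow (k := k) A 0)), map_smul, smul_eq_mul]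
  have rhs_eq : ∑ i ∈ u, ∑ j ∈ t' i, f (actM (p i) m ⊗ₜ actA (S (r' i j) * s' i j) a)
      = f (actM h m ⊗ₜ a) := by
    have per : ∀ i, ∑ j ∈ t' i, f (actM (p i) m ⊗ₜ actA (S (r' i j) * s' i j) a)
        = ε (q i) * f (actM (p i) m ⊗ₜ a) := by
      intro i
      have h1 : ∑ j ∈ t' i, f (actM (p i) m ⊗ₜ actA (S (r' i j) * s' i j) a)
          = f (actM (p i) m ⊗ₜ actA (∑ j ∈ t' i, S (r' i j) * s' i j) a) := by
        simp [map_sum, LinearMap.sum_apply, TensorProduct.tmul_sum]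
        erw [TensorProduct.tmul_sum, map_sum]
      erw [h1, sum_antipode_mul' (hrs' i), map_smul, LinearMap.smul_apply,
        TensorProduct.tmul_smul (R := k) (R' := k) (M := M) (N := ↥(Tpow (k := k) A 0)), map_smul, smul_eq_mul, hactA.1]
      rfl
    rw [Finset.sum_congr rfl (fun i _ => per i)]
    conv_rhs => rw [← sum_smul_counit hu]
    simp [map_sum, LinearMap.sum_apply, TensorProduct.sum_tmul, map_smul,
      LinearMap.smul_apply, TensorProduct.smul_tmul, smul_eq_mul, mul_comm]
    erw [TensorProduct.sum_tmul, map_sum]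
    refine Finset.sum_congr rfl fun i _ => ?_
    erw [← TensorProduct.smul_tmul', map_smul, smul_eq_mul]
  calc f (actM h m ⊗ₜ a)
      = ∑ i ∈ u, ∑ j ∈ t' i, f (actM (p i) m ⊗ₜ actA (S (r' i j) * s' i j) a) :=
        rhs_eq.symm
    _ = ∑ i ∈ u, ∑ j ∈ t i, f (actM (r i j) m ⊗ₜ actA (S (s i j) * q i) a) := ex.symm
    _ = ∑ i ∈ u, f (rAct (k := k) Δ S actA actM 0 ((m ⊗ₜ actA (q i) a) ⊗ₜ p i)) :=
        (Finset.sum_congr rfl fun i _ => (key2 i).symm)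
    _ = ∑ i ∈ u, ε (p i) * f (m ⊗ₜ actA (q i) a) :=
        Finset.sum_congr rfl fun i _ => hfequiv _ _
    _ = f (m ⊗ₜ actA h a) := lhs_eq

set_option maxHeartbeats 1000000 in
lemma trace0 (Sinv : H →ₗ[k] H)
    (hfclosed : Dop (k := k) Sinv actA coactM 0 0 f = Dop (k := k) Sinv actA coactM 0 1 f)
    {ι : Type} {u : Finset ι} {e : ι → H} {m0 : ι → M} {m : M}
    (hrep : coactM m = ∑ l ∈ u, e l ⊗ₜ m0 l) (a b : A) :
    f (m ⊗ₜ (a * b)) = ∑ l ∈ u, f (m0 l ⊗ₜ (actA (Sinv (e l)) b * a)) := by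
  have h0 := LinearMap.congr_fun hfclosed (m ⊗ₜ (a ⊗ₜ b) : M ⊗[k] ↥(Tpow (k := k) A 1))
  have h1 : Dop (k := k) Sinv actA coactM 0 0 f (m ⊗ₜ (a ⊗ₜ b)) = f (m ⊗ₜ (a * b)) := rfl
  have h2 : Dop (k := k) Sinv actA coactM 0 1 f (m ⊗ₜ (a ⊗ₜ b))
      = f ((TensorProduct.map LinearMap.id (mulAt (k := k) 0 0))
          (cycA (k := k) Sinv actA coactM 1 (m ⊗ₜ (a ⊗ₜ b)))) := rfl
  rw [h1, h2] at h0
  have h3 : cycA (k := k) Sinv actA coactM 1 (m ⊗ₜ (a ⊗ₜ b))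
      = ∑ l ∈ u, m0 l ⊗ₜ (actA (Sinv (e l)) b ⊗ₜ a : ↥(Tpow (k := k) A 1)) :=
    cycA_one_apply Sinv actA coactM hrep a b
  erw [h0, h3, map_sum, map_sum]
  exact Finset.sum_congr rfl fun l _ => rfl

lemma rot0 (Sinv : H →ₗ[k] H)
    (hS : ∀ g : H, Sinv (S g) = g) (hS' : ∀ g : H, S (Sinv g) = g)
    (hactA : IsLAct (k := k) actA)
    (hco : IsLCoact (k := k) Δ ε coactM)
    (hfclosed : Dop (k := k) Sinv actA coactM 0 0 f = Dop (k := k) Sinv actA coactM 0 1 f)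
    {ι : Type} {u : Finset ι} {e : ι → H} {m0 : ι → M} {m : M}
    (hrep : coactM m = ∑ l ∈ u, e l ⊗ₜ m0 l) (b Y : A) :
    f (m ⊗ₜ (b * Y)) = ∑ l ∈ u, f (m0 l ⊗ₜ (Y * actA (e l) b)) := by
  choose t e1 e2 he using fun l => exists_nat_repr (Δ (e l))
  choose s g m' hg using fun l => exists_nat_repr (coactM (m0 l))
  have E := coact_coassoc coactM hco hrep (fun l _ => he l) (fun l _ => hg l)
  have step1 : ∀ l, f (m0 l ⊗ₜ (Y * actA (e l) b))
      = ∑ j ∈ s l, f (m' l j ⊗ₜ (actA (Sinv (g l j) * e l) b * Y)) := by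
    intro l
    rw [trace0 actA coactM f Sinv hfclosed (hg l) Y (actA (e l) b)]
    refine Finset.sum_congr rfl fun j _ => ?_
    have : actA (Sinv (g l j) * e l) b = actA (Sinv (g l j)) (actA (e l) b) := by
      rw [hactA.2]; rfl
    rw [this]
  set G : (H ⊗[k] H) ⊗[k] M →ₗ[k] k :=
    f ∘ₗ (TensorProduct.comm k A M).toLinearMap ∘ₗ
      (TensorProduct.map ((LinearMap.mulRight k Y) ∘ₗ ((LinearMap.flip actA) b) ∘ₗ
        (LinearMap.mul' k H) ∘ₗ (TensorProduct.map Sinv LinearMap.id) ∘ₗ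
        (TensorProduct.comm k H H).toLinearMap) LinearMap.id) with hG
  have hGapp : ∀ (x y : H) (z : M), G ((x ⊗ₜ y) ⊗ₜ z)
      = f (z ⊗ₜ (actA (Sinv y * x) b * Y)) := by
    intro x y z
    rfl
  have ex := congrArg G E
  simp only [map_sum, hGapp] at ex
  calc f (m ⊗ₜ (b * Y))
      = ∑ l ∈ u, ε (e l) • f (m0 l ⊗ₜ (b * Y)) := by
        conv_lhs => rw [← coact_counit coactM hco hrep]
        simp [TensorProduct.sum_tmul, map_sum, TensorProduct.smul_tmul, map_smul]
        erw [TensorProduct.sum_tmul, map_sum]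
        refine Finset.sum_congr rfl fun l _ => ?_
        erw [← TensorProduct.smul_tmul', map_smul, smul_eq_mul]
    _ = ∑ l ∈ u, ∑ j ∈ t l, f (m0 l ⊗ₜ (actA (Sinv (e2 l j) * e1 l j) b * Y)) := by
        refine Finset.sum_congr rfl fun l hl => ?_
        have h1 : ∑ j ∈ t l, f (m0 l ⊗ₜ (actA (Sinv (e2 l j) * e1 l j) b * Y))
            = f (m0 l ⊗ₜ (actA (∑ j ∈ t l, Sinv (e2 l j) * e1 l j) b * Y)) := by
          simp [map_sum, LinearMap.sum_apply, Finset.sum_mul, TensorProduct.tmul_sum]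
          erw [TensorProduct.tmul_sum, map_sum]
        erw [h1, sum_sinv_mul Sinv hS hS' (he l), map_smul, LinearMap.smul_apply,
          smul_mul_assoc, TensorProduct.tmul_smul (R := k) (R' := k) (M := M) (N := ↥(Tpow (k := k) A 0)),
          map_smul, hactA.1]
        rfl
    _ = ∑ l ∈ u, ∑ j ∈ s l, f (m' l j ⊗ₜ (actA (Sinv (g l j) * e l) b * Y)) := ex
    _ = ∑ l ∈ u, f (m0 l ⊗ₜ (Y * actA (e l) b)) :=
        Finset.sum_congr rfl fun l _ => (step1 l).symm


lemma tpow_one_induction {P : ↥(Tpow (k := k) C 1) → Prop}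
    (h0 : P 0) (htmul : ∀ (c c' : C), P (c ⊗ₜ c'))
    (hadd : ∀ x y, P x → P y → P (x + y)) : ∀ x, P x := fun x =>
  TensorProduct.induction_on x h0 htmul hadd

lemma ev_mul (ΔC : C →ₗ[k] C ⊗[k] C)
    (hCA1 : ∀ (c : C) (x y : A) (w : Finset ℕ) (c1 c2 : ℕ → C),
      ΔC c = ∑ j ∈ w, c1 j ⊗ₜ c2 j →
      actCA c (x * y) = ∑ j ∈ w, actCA (c1 j) x * actCA (c2 j) y) :
    ∀ (n i : ℕ) (x : ↥(Tpow (k := k) C n)) (y : ↥(Tpow (k := k) A (n+1))),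
      ev actCA (n+1) (coface (k := k) ΔC n i x ⊗ₜ y)
        = ev actCA n (x ⊗ₜ mulAt (k := k) n i y) := by
  intro n
  induction n with
  | zero =>
    intro i x y
    induction y using tpow_one_induction with
    | h0 => simp
    | htmul a b =>
      obtain ⟨w, c1, c2, hw⟩ := exists_nat_repr (ΔC x)
      have h1 : coface (k := k) ΔC 0 i x = ΔC x := rfl
      have h2 : ev actCA 0 (x ⊗ₜ mulAt (k := k) 0 i (a ⊗ₜ b)) = actCA x (a * b) := rfl
      erw [h1, h2, hw, TensorProduct.sum_tmul, map_sum, hCA1 x a b w c1 c2 hw]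
      exact Finset.sum_congr rfl fun j _ => rfl
    | hadd y₁ y₂ hy₁ hy₂ =>
      simp only [TensorProduct.tmul_add, map_add, hy₁, hy₂]
  | succ n ih =>
    intro i x y
    induction x using tpow_succ_induction with
    | h0 => simp
    | htmul c x' =>
      induction y using tpow_succ_induction with
      | h0 => simp; erw [TensorProduct.tmul_zero, map_zero]
      | htmul a y' =>
        cases i with
        | zero =>
          induction y' using tpow_succ_induction with
          | h0 =>
            erw [TensorProduct.tmul_zero, map_zero, TensorProduct.tmul_zero, map_zero]
          | htmul a' y'' =>
            obtain ⟨w, c1, c2, hw⟩ := exists_nat_repr (ΔC c)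
            have h1 : coface (k := k) ΔC (n+1) 0 (c ⊗ₜ x')
                = ∑ j ∈ w, c1 j ⊗ₜ (c2 j ⊗ₜ x') := coface_succ_zero ΔC n hw x'
            have h2 : mulAt (k := k) (n+1) 0 (a ⊗ₜ (a' ⊗ₜ y'')) = (a * a') ⊗ₜ y'' := rfl
            have h3 : ev actCA (n+1) ((c ⊗ₜ x') ⊗ₜ ((a * a') ⊗ₜ y''))
                = actCA c (a * a') * ev actCA n (x' ⊗ₜ y'') := rfl
            erw [h1, TensorProduct.sum_tmul, map_sum, h2, h3, hCA1 c a a' w c1 c2 hw,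
              Finset.sum_mul]
            refine Finset.sum_congr rfl fun j _ => ?_
            have h4 : ev actCA (n+1+1) ((c1 j ⊗ₜ (c2 j ⊗ₜ x')) ⊗ₜ (a ⊗ₜ (a' ⊗ₜ y'')))
                = actCA (c1 j) a * (actCA (c2 j) a' * ev actCA n (x' ⊗ₜ y'')) := rfl
            erw [h4, mul_assoc]
          | hadd z₁ z₂ h₁ h₂ =>
            erw [TensorProduct.tmul_add, TensorProduct.tmul_add, map_add, map_add,
              TensorProduct.tmul_add, map_add, h₁, h₂]
        | succ i' =>
          have h1 : coface (k := k) ΔC (n+1) (i'+1) (c ⊗ₜ x')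
              = c ⊗ₜ coface (k := k) ΔC n i' x' := rfl
          have h2 : ev actCA (n+1+1) ((c ⊗ₜ coface (k := k) ΔC n i' x') ⊗ₜ (a ⊗ₜ y'))
              = actCA c a * ev actCA (n+1) (coface (k := k) ΔC n i' x' ⊗ₜ y') := rfl
          have h3 : mulAt (k := k) (n+1) (i'+1) (a ⊗ₜ y')
              = a ⊗ₜ mulAt (k := k) n i' y' := rfl
          have h4 : ev actCA (n+1) ((c ⊗ₜ x') ⊗ₜ (a ⊗ₜ mulAt (k := k) n i' y'))
              = actCA c a * ev actCA n (x' ⊗ₜ mulAt (k := k) n i' y') := rfl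
          rw [h1, h2, h3, h4, ih i' x' y']
      | hadd y₁ y₂ h₁ h₂ =>
        simp only [TensorProduct.tmul_add, map_add, h₁, h₂]
        erw [TensorProduct.tmul_add, map_add]
    | hadd x₁ x₂ h₁ h₂ =>
      simp only [TensorProduct.add_tmul, map_add, h₁, h₂]

lemma ev_dAct (hCA3 : ∀ (h : H) (c : C) (a : A), actCA (actC h c) a = actA h (actCA c a))
    (hmod1 : ∀ (h : H) (x y : A) (w : Finset ℕ) (p q : ℕ → H),
      Δ h = ∑ i ∈ w, p i ⊗ₜ q i → actA h (x * y) = ∑ i ∈ w, actA (p i) x * actA (q i) y) :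
    ∀ (n : ℕ) (h : H) (x : ↥(Tpow (k := k) C n)) (a : ↥(Tpow (k := k) A n)),
      ev actCA n (dAct (k := k) Δ actC n (h ⊗ₜ x) ⊗ₜ a)
        = actA h (ev actCA n (x ⊗ₜ a)) := by
  intro n
  induction n with
  | zero => intro h x a; exact hCA3 h x a
  | succ n ih =>
    intro h x a
    induction x using tpow_succ_induction with
    | h0 => simp
    | htmul c x' =>
      induction a using tpow_succ_induction with
      | h0 => simp; erw [TensorProduct.tmul_zero, map_zero]
      | htmul a₀ aa =>
        obtain ⟨u, p, q, hu⟩ := exists_nat_repr (Δ h)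
        have h1 : dAct (k := k) Δ actC (n+1) (h ⊗ₜ (c ⊗ₜ x'))
            = ∑ i ∈ u, actC (p i) c ⊗ₜ dAct (k := k) Δ actC n (q i ⊗ₜ x') :=
          dAct_succ actC n hu c x'
        have h2 : ev actCA (n+1) ((c ⊗ₜ x') ⊗ₜ (a₀ ⊗ₜ aa))
            = actCA c a₀ * ev actCA n (x' ⊗ₜ aa) := rfl
        erw [h1, TensorProduct.sum_tmul, map_sum, h2,
          hmod1 h (actCA c a₀) (ev actCA n (x' ⊗ₜ aa)) u p q hu]
        refine Finset.sum_congr rfl fun i _ => ?_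
        have h3 : ev actCA (n+1)
              ((actC (p i) c ⊗ₜ dAct (k := k) Δ actC n (q i ⊗ₜ x')) ⊗ₜ (a₀ ⊗ₜ aa))
            = actCA (actC (p i) c) a₀
                * ev actCA n (dAct (k := k) Δ actC n (q i ⊗ₜ x') ⊗ₜ aa) := rfl
        rw [h3, hCA3, ih (q i) x' aa]
      | hadd a₁ a₂ h₁ h₂ =>
        simp only [TensorProduct.tmul_add, map_add, h₁, h₂]
        erw [TensorProduct.tmul_add, map_add, map_add]
    | hadd x₁ x₂ h₁ h₂ =>
      simp only [TensorProduct.tmul_add, TensorProduct.add_tmul, map_add, h₁, h₂]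

lemma snoc_ev' : ∀ (n : ℕ) (x : ↥(Tpow (k := k) C n)) (c : C)
    (y : ↥(Tpow (k := k) A n)) (a : A),
    ev actCA (n+1) (snoc (k := k) n (x ⊗ₜ c) ⊗ₜ (unsnoc (k := k) (C := A) n).symm (y ⊗ₜ a))
      = ev actCA n (x ⊗ₜ y) * actCA c a := by
  intro n
  induction n with
  | zero => intro x c y a; rfl
  | succ n ih =>
    intro x c y a
    induction x using tpow_succ_induction with
    | h0 => simp
    | htmul c₀ x' =>
      induction y using tpow_succ_induction with
      | h0 => simp; erw [TensorProduct.tmul_zero, map_zero, zero_mul]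
      | htmul a₀ y' =>
        have h1 : snoc (k := k) (n+1) ((c₀ ⊗ₜ x') ⊗ₜ c)
            = c₀ ⊗ₜ snoc (k := k) n (x' ⊗ₜ c) := rfl
        have h2 : (unsnoc (k := k) (C := A) (n+1)).symm ((a₀ ⊗ₜ y') ⊗ₜ a)
            = a₀ ⊗ₜ (unsnoc (k := k) (C := A) n).symm (y' ⊗ₜ a) := rfl
        have h3 : ev actCA (n+1+1) ((c₀ ⊗ₜ snoc (k := k) n (x' ⊗ₜ c)) ⊗ₜ
              (a₀ ⊗ₜ (unsnoc (k := k) (C := A) n).symm (y' ⊗ₜ a)))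
            = actCA c₀ a₀ * ev actCA (n+1) (snoc (k := k) n (x' ⊗ₜ c) ⊗ₜ
                (unsnoc (k := k) (C := A) n).symm (y' ⊗ₜ a)) := rfl
        have h4 : ev actCA (n+1) ((c₀ ⊗ₜ x') ⊗ₜ (a₀ ⊗ₜ y'))
            = actCA c₀ a₀ * ev actCA n (x' ⊗ₜ y') := rfl
        rw [h1, h2, h3, ih x' c y' a, h4, mul_assoc]
      | hadd y₁ y₂ h₁ h₂ =>
        simp only [TensorProduct.add_tmul, TensorProduct.tmul_add, map_add, h₁, h₂,
          add_mul]
        erw [TensorProduct.tmul_add, map_add, add_mul]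
    | hadd x₁ x₂ h₁ h₂ =>
      simp only [TensorProduct.add_tmul, TensorProduct.tmul_add, map_add, h₁, h₂,
        add_mul]

lemma pair_cyc (Sinv : H →ₗ[k] H)
    (hS : ∀ g : H, Sinv (S g) = g) (hS' : ∀ g : H, S (Sinv g) = g)
    (hactA : IsLAct (k := k) actA)
    (hco : IsLCoact (k := k) Δ ε coactM)
    (hfclosed : Dop (k := k) Sinv actA coactM 0 0 f = Dop (k := k) Sinv actA coactM 0 1 f)
    (hCA3 : ∀ (h : H) (c : C) (a : A), actCA (actC h c) a = actA h (actCA c a)) :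
    ∀ (n : ℕ) (x : M ⊗[k] ↥(Tpow (k := k) C n)),
      pairFn (M := M) actCA n f (cyc (k := k) actC coactM n x)
        = (pairFn (M := M) actCA n f x) ∘ₗ rot (k := k) n := by
  intro n x
  induction x using TensorProduct.induction_on with
  | zero => rw [map_zero, pairFn_zero, LinearMap.zero_comp]
  | add x₁ x₂ h₁ h₂ =>
    rw [map_add, pairFn_add, pairFn_add, h₁, h₂, LinearMap.add_comp]
  | tmul m ξ =>
    obtain ⟨u, e, m0, hrep⟩ := exists_nat_repr (coactM m)
    cases n with
    | zero =>
      have h1 : cyc (k := k) actC coactM 0 (m ⊗ₜ ξ) = ∑ l ∈ u, m0 l ⊗ₜ actC (e l) ξ :=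
        cyc_zero_apply actC coactM hrep ξ
      refine LinearMap.ext fun a => ?_
      have lhs : pairFn (M := M) actCA 0 f (cyc (k := k) actC coactM 0 (m ⊗ₜ ξ)) a
          = ∑ l ∈ u, f (m0 l ⊗ₜ (1 * actA (e l) (actCA ξ a))) := by
        erw [h1, pairFn_sum, LinearMap.sum_apply]
        refine Finset.sum_congr rfl fun l _ => ?_
        have h4 : pairFn (M := M) actCA 0 f (m0 l ⊗ₜ actC (e l) ξ) a
            = f (m0 l ⊗ₜ actCA (actC (e l) ξ) a) := rfl
        erw [h4, hCA3, one_mul]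
      have rhs : (pairFn (M := M) actCA 0 f (m ⊗ₜ ξ) ∘ₗ rot (k := k) 0) a
          = f (m ⊗ₜ (actCA ξ a * 1)) := by
        have h5 : (pairFn (M := M) actCA 0 f (m ⊗ₜ ξ) ∘ₗ rot (k := k) 0) a
            = f (m ⊗ₜ actCA ξ a) := rfl
        erw [h5, mul_one]
      erw [lhs, rhs,
        rot0 actA coactM f Sinv hS hS' hactA hco hfclosed hrep (actCA ξ a) 1]
      rfl
    | succ p =>
      induction ξ using tpow_succ_induction with
      | h0 => simp only [TensorProduct.tmul_zero, map_zero, pairFn_zero, LinearMap.zero_comp]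
      | htmul c x' =>
        refine LinearMap.ext fun aa => ?_
        obtain ⟨z, hz⟩ : ∃ z, aa = (unsnoc (k := k) (C := A) p).symm z :=
          ⟨unsnoc (k := k) (C := A) p aa, (LinearEquiv.symm_apply_apply _ _).symm⟩
        subst hz
        induction z using TensorProduct.induction_on with
        | zero => simp only [map_zero]
        | add z₁ z₂ h₁ h₂ => simp only [map_add, h₁, h₂]
        | tmul y a =>
          calc pairFn (M := M) actCA (p+1) f
                (cyc (k := k) actC coactM (p+1) (m ⊗ₜ (c ⊗ₜ x')))
                ((unsnoc (k := k) (C := A) p).symm (y ⊗ₜ a))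
              = ∑ l ∈ u, f (m0 l ⊗ₜ (ev actCA p (x' ⊗ₜ y) * actA (e l) (actCA c a))) := by
                have h1 : cyc (k := k) actC coactM (p+1) (m ⊗ₜ (c ⊗ₜ x'))
                    = ∑ l ∈ u, m0 l ⊗ₜ snoc (k := k) p (x' ⊗ₜ actC (e l) c) :=
                  cyc_succ_apply actC coactM p hrep c x'
                rw [h1, pairFn_sum, LinearMap.sum_apply]
                refine Finset.sum_congr rfl fun l _ => ?_
                have h2 : pairFn (M := M) actCA (p+1) f
                      (m0 l ⊗ₜ snoc (k := k) p (x' ⊗ₜ actC (e l) c))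
                      ((unsnoc (k := k) (C := A) p).symm (y ⊗ₜ a))
                    = f (m0 l ⊗ₜ ev actCA (p+1) (snoc (k := k) p (x' ⊗ₜ actC (e l) c)
                        ⊗ₜ (unsnoc (k := k) (C := A) p).symm (y ⊗ₜ a))) := rfl
                rw [h2, snoc_ev' actCA p x' (actC (e l) c) y a, hCA3]
            _ = f (m ⊗ₜ (actCA c a * ev actCA p (x' ⊗ₜ y))) :=
                (rot0 actA coactM f Sinv hS hS' hactA hco hfclosed hrep (actCA c a)
                  (ev actCA p (x' ⊗ₜ y))).symm
            _ = (pairFn (M := M) actCA (p+1) f (m ⊗ₜ (c ⊗ₜ x')) ∘ₗ rot (k := k) (p+1))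
                  ((unsnoc (k := k) (C := A) p).symm (y ⊗ₜ a)) := by
                have h3 : rot (k := k) (p+1)
                      ((unsnoc (k := k) (C := A) p).symm (y ⊗ₜ a)) = a ⊗ₜ y :=
                  rot_succ p y a
                have h4 : (pairFn (M := M) actCA (p+1) f (m ⊗ₜ (c ⊗ₜ x'))) ((a ⊗ₜ y) :
                      ↥(Tpow (k := k) A (p+1)))
                    = f (m ⊗ₜ (actCA c a * ev actCA p (x' ⊗ₜ y))) := rfl
                rw [LinearMap.comp_apply, h3, h4]
      | hadd ξ₁ ξ₂ h₁ h₂ =>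
        rw [TensorProduct.tmul_add, map_add, pairFn_add, pairFn_add, h₁, h₂,
          LinearMap.add_comp]

lemma pair_coface (ΔC : C →ₗ[k] C ⊗[k] C)
    (hCA1 : ∀ (c : C) (x y : A) (w : Finset ℕ) (c1 c2 : ℕ → C),
      ΔC c = ∑ j ∈ w, c1 j ⊗ₜ c2 j →
      actCA c (x * y) = ∑ j ∈ w, actCA (c1 j) x * actCA (c2 j) y)
    (n i : ℕ) (x : M ⊗[k] ↥(Tpow (k := k) C n)) :
    pairFn (M := M) actCA (n+1) f
        ((TensorProduct.map LinearMap.id (coface (k := k) ΔC n i)) x)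
      = (pairFn (M := M) actCA n f x) ∘ₗ mulAt (k := k) n i := by
  induction x using TensorProduct.induction_on with
  | zero => rw [map_zero, pairFn_zero, pairFn_zero, LinearMap.zero_comp]
  | add x₁ x₂ h₁ h₂ =>
    rw [map_add, pairFn_add, pairFn_add, h₁, h₂, LinearMap.add_comp]
  | tmul m ξ =>
    refine LinearMap.ext fun aa => ?_
    have h1 : (TensorProduct.map LinearMap.id (coface (k := k) ΔC n i)) (m ⊗ₜ ξ)
        = m ⊗ₜ coface (k := k) ΔC n i ξ := rfl
    have h2 : pairFn (M := M) actCA (n+1) f (m ⊗ₜ coface (k := k) ΔC n i ξ) aa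
        = f (m ⊗ₜ ev actCA (n+1) (coface (k := k) ΔC n i ξ ⊗ₜ aa)) := rfl
    have h3 : (pairFn (M := M) actCA n f (m ⊗ₜ ξ) ∘ₗ mulAt (k := k) n i) aa
        = f (m ⊗ₜ ev actCA n (ξ ⊗ₜ mulAt (k := k) n i aa)) := rfl
    rw [h1, h2, h3, ev_mul actCA ΔC hCA1 n i ξ aa]

lemma pair_face (ΔC : C →ₗ[k] C ⊗[k] C)
    (hCA1 : ∀ (c : C) (x y : A) (w : Finset ℕ) (c1 c2 : ℕ → C),
      ΔC c = ∑ j ∈ w, c1 j ⊗ₜ c2 j →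
      actCA c (x * y) = ∑ j ∈ w, actCA (c1 j) x * actCA (c2 j) y)
    (Sinv : H →ₗ[k] H)
    (hS : ∀ g : H, Sinv (S g) = g) (hS' : ∀ g : H, S (Sinv g) = g)
    (hactA : IsLAct (k := k) actA)
    (hco : IsLCoact (k := k) Δ ε coactM)
    (hfclosed : Dop (k := k) Sinv actA coactM 0 0 f = Dop (k := k) Sinv actA coactM 0 1 f)
    (hCA3 : ∀ (h : H) (c : C) (a : A), actCA (actC h c) a = actA h (actCA c a))
    (n i : ℕ) (x : M ⊗[k] ↥(Tpow (k := k) C n)) :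
    pairFn (M := M) actCA (n+1) f (faceMap (k := k) ΔC actC coactM n i x)
      = Dord (k := k) n i (pairFn (M := M) actCA n f x) := by
  by_cases hc : i = n + 1
  · subst hc
    have h1 : faceMap (k := k) ΔC actC coactM n (n+1) x
        = cyc (k := k) actC coactM (n+1)
            ((TensorProduct.map LinearMap.id (coface (k := k) ΔC n 0)) x) := by
      rw [faceMap, if_pos rfl]
      rfl
    have h2 : Dord (k := k) n (n+1) (pairFn (M := M) actCA n f x)
        = (pairFn (M := M) actCA n f x) ∘ₗ (mulAt (k := k) n 0) ∘ₗ (rot (k := k) (n+1)) := by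
      rw [Dord, if_pos rfl]
    rw [h1, h2, pair_cyc actC actA coactM actCA f Sinv hS hS' hactA hco hfclosed hCA3 (n+1) _,
      pair_coface actCA f ΔC hCA1 n 0 x, LinearMap.comp_assoc]
  · have h1 : faceMap (k := k) ΔC actC coactM n i x
        = (TensorProduct.map LinearMap.id (coface (k := k) ΔC n i)) x := by
      rw [faceMap, if_neg hc]
    have h2 : Dord (k := k) n i (pairFn (M := M) actCA n f x)
        = (pairFn (M := M) actCA n f x) ∘ₗ mulAt (k := k) n i := by
      rw [Dord, if_neg hc]
    rw [h1, h2, pair_coface actCA f ΔC hCA1 n i x]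


lemma pair_b (ΔC : C →ₗ[k] C ⊗[k] C)
    (hCA1 : ∀ (c : C) (x y : A) (w : Finset ℕ) (c1 c2 : ℕ → C),
      ΔC c = ∑ j ∈ w, c1 j ⊗ₜ c2 j →
      actCA c (x * y) = ∑ j ∈ w, actCA (c1 j) x * actCA (c2 j) y)
    (Sinv : H →ₗ[k] H)
    (hS : ∀ g : H, Sinv (S g) = g) (hS' : ∀ g : H, S (Sinv g) = g)
    (hactA : IsLAct (k := k) actA)
    (hco : IsLCoact (k := k) Δ ε coactM)
    (hfclosed : Dop (k := k) Sinv actA coactM 0 0 f = Dop (k := k) Sinv actA coactM 0 1 f)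
    (hCA3 : ∀ (h : H) (c : C) (a : A), actCA (actC h c) a = actA h (actCA c a))
    (n : ℕ) (x : M ⊗[k] ↥(Tpow (k := k) C n)) :
    pairFn (M := M) actCA (n+1) f (bC (k := k) ΔC actC coactM n x)
      = bord (k := k) n (pairFn (M := M) actCA n f x) := by
  have h1 : bC (k := k) ΔC actC coactM n x
      = ∑ i ∈ Finset.range (n+2),
          ((-1 : k) ^ i) • faceMap (k := k) ΔC actC coactM n i x := by
    simp only [bC, LinearMap.sum_apply, Finset.sum_apply, LinearMap.smul_apply]
  rw [h1, pairFn_sum]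
  simp only [bord]
  refine Finset.sum_congr rfl fun i _ => ?_
  rw [pairFn_smul,
    pair_face actC actA coactM actCA f ΔC hCA1 Sinv hS hS' hactA hco hfclosed hCA3 n i x]

lemma pair_rel (hfequiv : EquivFn (k := k) Δ ε S actA actM 0 f)
    (hactA : IsLAct (k := k) actA)
    (hCA3 : ∀ (h : H) (c : C) (a : A), actCA (actC h c) a = actA h (actCA c a))
    (hmod1 : ∀ (h : H) (x y : A) (w : Finset ℕ) (p q : ℕ → H),
      Δ h = ∑ i ∈ w, p i ⊗ₜ q i → actA h (x * y) = ∑ i ∈ w, actA (p i) x * actA (q i) y)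
    (n : ℕ) :
    ∀ z ∈ rel (k := k) Δ actC actM n, pairFn (M := M) actCA n f z = 0 := by
  intro z hz
  refine Submodule.span_induction ?_ ?_ ?_ ?_ hz
  · rintro w ⟨h, m, x, rfl⟩
    rw [pairFn_sub]
    refine sub_eq_zero.mpr ?_
    refine LinearMap.ext fun aa => ?_
    have h1 : pairFn (M := M) actCA n f (actM h m ⊗ₜ x) aa
        = f (actM h m ⊗ₜ ev actCA n (x ⊗ₜ aa)) := rfl
    have h2 : pairFn (M := M) actCA n f (m ⊗ₜ dAct (k := k) Δ actC n (h ⊗ₜ x)) aa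
        = f (m ⊗ₜ ev actCA n (dAct (k := k) Δ actC n (h ⊗ₜ x) ⊗ₜ aa)) := rfl
    rw [h1, h2, ev_dAct actC actA actCA hCA3 hmod1 n h x aa,
      f_equiv_move actA actM f hfequiv hactA h m (ev actCA n (x ⊗ₜ aa))]
  · exact pairFn_zero actCA f n
  · intro a b _ _ ha hb
    rw [pairFn_add, ha, hb, add_zero]
  · intro c a _ hc
    rw [pairFn_smul, hc, smul_zero]

end Core

end HCAux2



/-- (Pairing `HCⁿ_H(C,M) ⊗ Z⁰_H(A,M) → HCⁿ(A)`.)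
Given a left `H`-module coalgebra `C` acting on a left `H`-module algebra `A`
and a stable right-left anti-Yetter-Drinfeld module `M` (over a field of
characteristic zero), every cyclic `n`-cocycle `x` of the Hopf-cyclic complex
of `C` with coefficients in `M` and every closed equivariant `0`-cocycle
`f : M ⊗ A → k` pair to an ordinary cyclic `n`-cocycle `x # f` of `A`, and the
cyclic cohomology class of `x # f` only depends on the class of `x`. -/
theorem stmt17 {k : Type} [Field k] [CharZero k]
    {H : Type} [Ring H] [HopfAlgebra k H]
    (Sinv : H →ₗ[k] H)
    (hS : ∀ h : H, Sinv (HopfAlgebra.antipode (R := k) h) = h)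
    (hS' : ∀ h : H, HopfAlgebra.antipode (R := k) (Sinv h) = h)
    {M : Type} [AddCommGroup M] [Module k M]
    (actM : H →ₗ[k] M →ₗ[k] M) (coactM : M →ₗ[k] H ⊗[k] M)
    (hactM : IsRAct actM)
    (hcoactM : IsLCoact (Coalgebra.comul (R := k)) (Coalgebra.counit (R := k)) coactM)
    (hAYD : AYDrl (Coalgebra.comul (R := k)) (HopfAlgebra.antipode (R := k)) actM coactM)
    (hstable : StableL actM coactM)
    {C : Type} [AddCommGroup C] [Module k C]
    (ΔC : C →ₗ[k] C ⊗[k] C) (εC : C →ₗ[k] k) (actC : H →ₗ[k] C →ₗ[k] C)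
    (hCcoalg : IsCoalg ΔC εC) (hactC : IsLAct actC)
    (hmodcoalg : IsModCoalg (Coalgebra.comul (R := k)) (Coalgebra.counit (R := k))
      ΔC εC actC)
    {A : Type} [Ring A] [Algebra k A]
    (actA : H →ₗ[k] A →ₗ[k] A) (hactA : IsLAct actA)
    (hmodalg : IsModAlg (Coalgebra.comul (R := k)) (Coalgebra.counit (R := k)) actA)
    -- the action of `C` on `A`:
    (actCA : C →ₗ[k] A →ₗ[k] A)
    (hCA1 : ∀ (c : C) (x y : A) (u : Finset ℕ) (c1 c2 : ℕ → C),
      ΔC c = ∑ j ∈ u, c1 j ⊗ₜ c2 j →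
      actCA c (x * y) = ∑ j ∈ u, actCA (c1 j) x * actCA (c2 j) y)
    (hCA2 : ∀ c : C, actCA c 1 = εC c • (1 : A))
    (hCA3 : ∀ (h : H) (c : C) (a : A),
      actCA (actC h c) a = actA h (actCA c a))
    -- the closed equivariant `0`-cocycle `f` on `A`:
    (f : M ⊗[k] ↥(Tpow (k := k) A 0) →ₗ[k] k)
    (hfequiv : EquivFn (Coalgebra.comul (R := k)) (Coalgebra.counit (R := k))
      (HopfAlgebra.antipode (R := k)) actA actM 0 f)
    (hfclosed : Dop Sinv actA coactM 0 0 f = Dop Sinv actA coactM 0 1 f)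
    (hfcyc : Top Sinv actA coactM 0 f = f) :
    -- (0) the pairing vanishes on the balancing relations
    (∀ (n : ℕ), ∀ z ∈ rel (Coalgebra.comul (R := k)) actC actM n,
      pairFn (M := M) actCA n f z = 0) ∧
    -- (1),(2) cyclic cocycles pair to ordinary cyclic cocycles
    (∀ (n : ℕ) (x : M ⊗[k] ↥(Tpow (k := k) C n)),
      bC ΔC actC coactM n x ∈ rel (Coalgebra.comul (R := k)) actC actM (n+1) →
      cyc actC coactM n x - ((-1 : k) ^ n) • x ∈
        rel (Coalgebra.comul (R := k)) actC actM n →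
      ((pairFn (M := M) actCA n f x) ∘ₗ rot n =
          ((-1 : k) ^ n) • pairFn (M := M) actCA n f x) ∧
        bord n (pairFn (M := M) actCA n f x) = 0) ∧
    -- (3) the class of `x # f` depends only on the class of `x`
    (∀ (m : ℕ) (x x' : M ⊗[k] ↥(Tpow (k := k) C (m+1)))
        (y : M ⊗[k] ↥(Tpow (k := k) C m))
        (r : M ⊗[k] ↥(Tpow (k := k) C (m+1))),
      bC ΔC actC coactM (m+1) x ∈ rel (Coalgebra.comul (R := k)) actC actM (m+2) →
      cyc actC coactM (m+1) x - ((-1 : k) ^ (m+1)) • x ∈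
        rel (Coalgebra.comul (R := k)) actC actM (m+1) →
      cyc actC coactM m y - ((-1 : k) ^ m) • y ∈
        rel (Coalgebra.comul (R := k)) actC actM m →
      r ∈ rel (Coalgebra.comul (R := k)) actC actM (m+1) →
      x' = x + bC ΔC actC coactM m y + r →
      ∃ ψ : ↥(Tpow (k := k) A m) →ₗ[k] k,
        ψ ∘ₗ rot m = ((-1 : k) ^ m) • ψ ∧
        pairFn (M := M) actCA (m+1) f x' - pairFn (M := M) actCA (m+1) f x =
          bord m ψ) := by
  have part0 : ∀ (n : ℕ), ∀ z ∈ rel (Coalgebra.comul (R := k)) actC actM n,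
      pairFn (M := M) actCA n f z = 0 := fun n =>
    HCAux2.pair_rel actC actA actM actCA f hfequiv hactA hCA3 hmodalg.1 n
  have hcycfact : ∀ (n : ℕ) (x : M ⊗[k] ↥(Tpow (k := k) C n)),
      cyc actC coactM n x - ((-1 : k) ^ n) • x ∈
          rel (Coalgebra.comul (R := k)) actC actM n →
      (pairFn (M := M) actCA n f x) ∘ₗ rot (k := k) n
        = ((-1 : k) ^ n) • pairFn (M := M) actCA n f x := by
    intro n x hx
    have h0 := part0 n _ hx
    rw [HCAux2.pairFn_sub, HCAux2.pairFn_smul, sub_eq_zero] at h0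
    rw [← HCAux2.pair_cyc actC actA coactM actCA f Sinv hS hS' hactA hcoactM
      hfclosed hCA3 n x, h0]
  refine ⟨part0, ?_, ?_⟩
  · intro n x hb hcyc
    refine ⟨hcycfact n x hcyc, ?_⟩
    rw [← HCAux2.pair_b actC actA coactM actCA f ΔC hCA1 Sinv hS hS' hactA hcoactM
      hfclosed hCA3 n x]
    exact part0 (n+1) _ hb
  · intro m x x' y r hbx hcycx hcycy hr hx'
    refine ⟨pairFn (M := M) actCA m f y, hcycfact m y hcycy, ?_⟩
    rw [hx', HCAux2.pairFn_add, HCAux2.pairFn_add, part0 (m+1) r hr,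
      HCAux2.pair_b actC actA coactM actCA f ΔC hCA1 Sinv hS hS' hactA hcoactM
      hfclosed hCA3 m y]
    abel
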